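/- arXiv:2507.14068 — 3 statements merged into one kernel-verified Lean document; each statement's English description precedes it below -/
import Mathlib

section
/- Let n ≥ 1. Then the number of join-irreducible elements of Tr([n]) and the number of meet-irreducible elements of Tr([n]) are both equal to the binomial coefficient C(n+1, 2) = n(n+1)/2. -/
/-- A transfer system on a finite lattice `L` (with trivial group action): a partial order
refining `≤` which is closed under restriction. -/
structure TransferSystem (L : Type*) [Lattice L] : Type _ where
  rel : L → L → Prop
  refl : ∀ x, rel x x
  trans : ∀ {x y z}, rel x y → rel y z → rel x z
  le_of_rel : ∀ {x y}, rel x y → x ≤ y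
  restrict : ∀ {x y x'}, rel x y → x' ≤ y → rel (x ⊓ x') x'

namespace TransferSystem

variable {L : Type*} [Lattice L]

theorem ext' {S T : TransferSystem L} (h : S.rel = T.rel) : S = T := by
  cases S; cases T; simpa using h

instance : PartialOrder (TransferSystem L) where
  le S T := ∀ ⦃x y : L⦄, S.rel x y → T.rel x y
  le_refl S := fun _ _ h => h
  le_trans S T U h1 h2 := fun _ _ h => h2 (h1 h)
  le_antisymm S T h1 h2 :=
    ext' (by funext x y; exact propext ⟨fun h => h1 h, fun h => h2 h⟩)

/-- The intersection of a set of transfer systems. -/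
def sInfTS (s : Set (TransferSystem L)) : TransferSystem L where
  rel x y := x ≤ y ∧ ∀ T ∈ s, T.rel x y
  refl x := ⟨le_refl x, fun T _ => T.refl x⟩
  trans h1 h2 := ⟨h1.1.trans h2.1, fun T hT => T.trans (h1.2 T hT) (h2.2 T hT)⟩
  le_of_rel h := h.1
  restrict h hle := ⟨inf_le_right, fun T hT => T.restrict (h.2 T hT) hle⟩

instance : InfSet (TransferSystem L) := ⟨sInfTS⟩

theorem sInf_rel (s : Set (TransferSystem L)) (x y : L) :
    (sInf s).rel x y ↔ x ≤ y ∧ ∀ T ∈ s, T.rel x y := Iff.rfl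

/-- The complete lattice of transfer systems, ordered by refinement. -/
instance : CompleteLattice (TransferSystem L) :=
  completeLatticeOfInf _ (fun s =>
    ⟨fun T hT _ _ h => h.2 T hT,
     fun T hT _ _ h => ((sInf_rel s _ _).2 ⟨T.le_of_rel h, fun S hS => hT hS h⟩)⟩)

end TransferSystem

/-- The codensity `ρ` of (the reduced formal context of) a finite lattice `α`:
the number of pairs `(A, B)` with `A` join-irreducible, `B` meet-irreducible and `A ≰ B`,
divided by the product of the numbers of join-irreducibles and meet-irreducibles. -/
noncomputable def codensity (α : Type*) [Lattice α] : ℚ :=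
  (Nat.card {p : α × α // SupIrred p.1 ∧ InfIrred p.2 ∧ ¬ p.1 ≤ p.2} : ℚ) /
    ((Nat.card {a : α // SupIrred a} : ℚ) * (Nat.card {a : α // InfIrred a} : ℚ))

namespace CardIrredChainAux

variable {n : ℕ}

theorem le_def {S T : TransferSystem (Fin (n + 1))} :
    S ≤ T ↔ ∀ ⦃x y⦄, S.rel x y → T.rel x y := Iff.rfl

/-- The minimal transfer system containing `a → b`. -/
def J (a b : Fin (n + 1)) : TransferSystem (Fin (n + 1)) where
  rel x y := x = y ∨ (x = a ∧ a < y ∧ y ≤ b)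
  refl x := Or.inl rfl
  trans := by
    rintro x y z (rfl | ⟨rfl, h1, h2⟩) (rfl | ⟨rfl, g1, g2⟩)
    · exact Or.inl rfl
    · exact Or.inr ⟨rfl, g1, g2⟩
    · exact Or.inr ⟨rfl, h1, h2⟩
    · exact absurd h1 (lt_irrefl _)
  le_of_rel := by
    rintro x y (rfl | ⟨rfl, h1, h2⟩)
    · exact le_rfl
    · exact h1.le
  restrict := by
    rintro x y x' (rfl | ⟨rfl, h1, h2⟩) hx'
    · exact Or.inl (inf_eq_right.mpr hx')
    · rcases le_or_gt x' x with h | h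
      · exact Or.inl (inf_eq_right.mpr h)
      · rw [inf_eq_left.mpr h.le]
        exact Or.inr ⟨rfl, h, hx'.trans h2⟩

/-- The transfer system `J a b` with the top pair removed. -/
def J' (a b : Fin (n + 1)) : TransferSystem (Fin (n + 1)) where
  rel x y := x = y ∨ (x = a ∧ a < y ∧ y < b)
  refl x := Or.inl rfl
  trans := by
    rintro x y z (rfl | ⟨rfl, h1, h2⟩) (rfl | ⟨rfl, g1, g2⟩)
    · exact Or.inl rfl
    · exact Or.inr ⟨rfl, g1, g2⟩
    · exact Or.inr ⟨rfl, h1, h2⟩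
    · exact absurd h1 (lt_irrefl _)
  le_of_rel := by
    rintro x y (rfl | ⟨rfl, h1, h2⟩)
    · exact le_rfl
    · exact h1.le
  restrict := by
    rintro x y x' (rfl | ⟨rfl, h1, h2⟩) hx'
    · exact Or.inl (inf_eq_right.mpr hx')
    · rcases le_or_gt x' x with h | h
      · exact Or.inl (inf_eq_right.mpr h)
      · rw [inf_eq_left.mpr h.le]
        exact Or.inr ⟨rfl, h, lt_of_le_of_lt hx' h2⟩

/-- The discrete transfer system. -/
def E : TransferSystem (Fin (n + 1)) where
  rel x y := x = y
  refl _ := rfl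
  trans h1 h2 := h1.trans h2
  le_of_rel h := le_of_eq h
  restrict := by rintro x y x' rfl h; exact inf_eq_right.mpr h

/-- The complete transfer system. -/
def F : TransferSystem (Fin (n + 1)) where
  rel x y := x ≤ y
  refl _ := le_rfl
  trans h1 h2 := h1.trans h2
  le_of_rel h := h
  restrict _ _ := inf_le_right

theorem J_rel_self {a b : Fin (n + 1)} (h : a < b) : (J a b).rel a b :=
  Or.inr ⟨rfl, h, le_rfl⟩

theorem J_le {a b : Fin (n + 1)} {T : TransferSystem (Fin (n + 1))}
    (hT : T.rel a b) : J a b ≤ T := by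
  refine le_def.mpr ?_
  rintro x y (rfl | ⟨rfl, h1, h2⟩)
  · exact T.refl x
  · have := T.restrict hT h2
    rwa [inf_eq_left.mpr h1.le] at this

theorem le_J' {a b : Fin (n + 1)} {S : TransferSystem (Fin (n + 1))}
    (hS : S ≤ J a b) (hab : ¬ S.rel a b) : S ≤ J' a b := by
  refine le_def.mpr fun x y hxy => ?_
  rcases le_def.mp hS hxy with rfl | ⟨rfl, h1, h2⟩
  · exact Or.inl rfl
  · rcases lt_or_eq_of_le h2 with h | rfl
    · exact Or.inr ⟨rfl, h1, h⟩
    · exact absurd hxy hab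

theorem supIrred_J {a b : Fin (n + 1)} (hab : a < b) : SupIrred (J a b) := by
  constructor
  · intro hmin
    have hE : E ≤ J a b := le_def.mpr (by rintro x y rfl; exact (J a b).refl x)
    have : (E : TransferSystem (Fin (n + 1))).rel a b :=
      le_def.mp (hmin hE) (J_rel_self hab)
    exact absurd this hab.ne
  · intro S1 S2 hsup
    by_contra hne
    push_neg at hne
    obtain ⟨h1, h2⟩ := hne
    have hS1 : S1 ≤ J a b := hsup ▸ le_sup_left
    have hS2 : S2 ≤ J a b := hsup ▸ le_sup_right
    have hr1 : ¬ S1.rel a b := fun h => h1 (le_antisymm hS1 (J_le h))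
    have hr2 : ¬ S2.rel a b := fun h => h2 (le_antisymm hS2 (J_le h))
    have hle : J a b ≤ J' a b := hsup ▸ sup_le (le_J' hS1 hr1) (le_J' hS2 hr2)
    rcases le_def.mp hle (J_rel_self hab) with h | ⟨-, -, h⟩
    · exact hab.ne h
    · exact lt_irrefl b h

theorem supIrred_iff {T : TransferSystem (Fin (n + 1))} :
    SupIrred T ↔ ∃ a b : Fin (n + 1), a < b ∧ T = J a b := by
  constructor
  · intro hT
    classical
    set s : Finset (Fin (n + 1) × Fin (n + 1)) :=
      Finset.univ.filter (fun p => p.1 < p.2 ∧ T.rel p.1 p.2) with hs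
    have hsup : s.sup (fun p => J p.1 p.2) = T := by
      apply le_antisymm
      · refine Finset.sup_le fun p hp => ?_
        rw [hs, Finset.mem_filter] at hp
        exact J_le hp.2.2
      · refine le_def.mpr fun x y hxy => ?_
        rcases eq_or_lt_of_le (T.le_of_rel hxy) with rfl | hlt
        · exact (Finset.sup s fun p => J p.1 p.2).refl x
        · have hmem : (x, y) ∈ s := by
            rw [hs, Finset.mem_filter]; exact ⟨Finset.mem_univ _, hlt, hxy⟩
          exact le_def.mp (Finset.le_sup hmem) (J_rel_self hlt)
    obtain ⟨p, hp, hpT⟩ := hT.finset_sup_eq hsup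
    rw [hs, Finset.mem_filter] at hp
    exact ⟨p.1, p.2, hp.2.1, hpT.symm⟩
  · rintro ⟨a, b, hab, rfl⟩
    exact supIrred_J hab

theorem J_inj {a b a' b' : Fin (n + 1)} (h : a < b) (h' : a' < b')
    (he : J a b = J a' b') : a = a' ∧ b = b' := by
  have h1 : (J a' b').rel a b := he ▸ J_rel_self h
  have h2 : (J a b).rel a' b' := he ▸ J_rel_self h'
  obtain ⟨ha, -, hb⟩ := h1.resolve_left h.ne
  obtain ⟨ha', -, hb'⟩ := h2.resolve_left h'.ne
  exact ⟨ha, le_antisymm hb hb'⟩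

/-- The maximal transfer system avoiding `a → b`. -/
def M (a b : Fin (n + 1)) : TransferSystem (Fin (n + 1)) where
  rel x y := x ≤ y ∧ ¬(a ≤ x ∧ x < b ∧ b ≤ y)
  refl x := ⟨le_rfl, fun ⟨_, h1, h2⟩ => absurd (h1.trans_le h2) (lt_irrefl _)⟩
  trans := by
    rintro x y z ⟨hxy, hxy'⟩ ⟨hyz, hyz'⟩
    refine ⟨hxy.trans hyz, ?_⟩
    rintro ⟨hax, hxb, hbz⟩
    rcases le_or_gt b y with h | h
    · exact hxy' ⟨hax, hxb, h⟩
    · exact hyz' ⟨hax.trans hxy, h, hbz⟩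
  le_of_rel h := h.1
  restrict := by
    rintro x y x' ⟨hxy, hxy'⟩ hx'y
    refine ⟨inf_le_right, ?_⟩
    rintro ⟨ham, hmb, hbx'⟩
    rcases le_or_gt x x' with h | h
    · rw [inf_eq_left.mpr h] at ham hmb
      exact hxy' ⟨ham, hmb, hbx'.trans hx'y⟩
    · rw [inf_eq_right.mpr h.le] at ham hmb
      exact absurd (hmb.trans_le hbx') (lt_irrefl _)

theorem not_M_rel {a b : Fin (n + 1)} (h : a < b) : ¬ (M a b).rel a b :=
  fun hr => hr.2 ⟨le_rfl, h, le_rfl⟩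

theorem rel_ab_of {a b : Fin (n + 1)} {S : TransferSystem (Fin (n + 1))}
    (hMS : M a b ≤ S) {x y : Fin (n + 1)} (hxy : S.rel x y)
    (hax : a ≤ x) (hxb : x < b) (hby : b ≤ y) : S.rel a b := by
  have hxb' : S.rel x b := by
    have := S.restrict hxy hby
    rwa [inf_eq_left.mpr hxb.le] at this
  have hax' : S.rel a x :=
    le_def.mp hMS ⟨hax, fun ⟨_, _, hbx⟩ => absurd (hxb.trans_le hbx) (lt_irrefl _)⟩
  exact S.trans hax' hxb'

/-- The "intersection" of two transfer systems. -/
def W (S1 S2 : TransferSystem (Fin (n + 1))) : TransferSystem (Fin (n + 1)) where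
  rel x y := S1.rel x y ∧ S2.rel x y
  refl x := ⟨S1.refl x, S2.refl x⟩
  trans h1 h2 := ⟨S1.trans h1.1 h2.1, S2.trans h1.2 h2.2⟩
  le_of_rel h := S1.le_of_rel h.1
  restrict h hle := ⟨S1.restrict h.1 hle, S2.restrict h.2 hle⟩

theorem infIrred_M {a b : Fin (n + 1)} (hab : a < b) : InfIrred (M a b) := by
  constructor
  · intro hmax
    have hF : M a b ≤ F := le_def.mpr fun x y h => h.1
    exact not_M_rel hab (le_def.mp (hmax hF) (hab.le : (F : TransferSystem (Fin (n+1))).rel a b))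
  · intro S1 S2 hinf
    by_contra hne
    push_neg at hne
    obtain ⟨h1, h2⟩ := hne
    have hS1 : M a b ≤ S1 := hinf ▸ inf_le_left
    have hS2 : M a b ≤ S2 := hinf ▸ inf_le_right
    have key : ∀ S : TransferSystem (Fin (n + 1)), M a b ≤ S → S ≠ M a b → S.rel a b := by
      intro S hMS hSne
      have hnle : ¬ S ≤ M a b := fun h => hSne (le_antisymm h hMS)
      rw [le_def] at hnle
      push_neg at hnle
      obtain ⟨x, y, hxy, hmxy⟩ := hnle
      have hbad : a ≤ x ∧ x < b ∧ b ≤ y := by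
        by_contra hc
        exact hmxy ⟨S.le_of_rel hxy, hc⟩
      exact rel_ab_of hMS hxy hbad.1 hbad.2.1 hbad.2.2
    have r1 : S1.rel a b := key S1 hS1 h1
    have r2 : S2.rel a b := key S2 hS2 h2
    have hW : W S1 S2 ≤ S1 ⊓ S2 :=
      le_inf (le_def.mpr fun x y h => h.1) (le_def.mpr fun x y h => h.2)
    have hwab : (W S1 S2).rel a b := ⟨r1, r2⟩
    exact not_M_rel hab (le_def.mp (hinf ▸ hW) hwab)

theorem infIrred_iff {T : TransferSystem (Fin (n + 1))} :
    InfIrred T ↔ ∃ a b : Fin (n + 1), a < b ∧ T = M a b := by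
  constructor
  · intro hT
    classical
    set s : Finset (Fin (n + 1) × Fin (n + 1)) :=
      Finset.univ.filter (fun p => p.1 < p.2 ∧ T ≤ M p.1 p.2) with hs
    have hinf : s.inf (fun p => M p.1 p.2) = T := by
      apply le_antisymm
      · refine le_def.mpr fun x y hxy => ?_
        by_contra hTxy
        have hxy' : x ≤ y := (Finset.inf s fun p => M p.1 p.2).le_of_rel hxy
        have hlt : x < y := hxy'.lt_of_ne (by rintro rfl; exact hTxy (T.refl x))
        obtain ⟨b, hbmem, hbmin⟩ :=
          (wellFounded_lt (α := Fin (n + 1))).has_min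
            {c | x < c ∧ ¬ T.rel x c} ⟨y, hlt, hTxy⟩
        obtain ⟨hxb, hTxb⟩ := hbmem
        have hby : b ≤ y := not_lt.mp (hbmin y ⟨hlt, hTxy⟩)
        have hTM : T ≤ M x b := by
          refine le_def.mpr fun u v huv => ⟨T.le_of_rel huv, ?_⟩
          rintro ⟨hxu, hub, hbv⟩
          have hub' : T.rel u b := by
            have := T.restrict huv hbv
            rwa [inf_eq_left.mpr hub.le] at this
          have hxu' : T.rel x u := by
            rcases eq_or_lt_of_le hxu with rfl | h
            · exact T.refl _
            · by_contra hc
              exact (hbmin u ⟨h, hc⟩) hub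
          exact hTxb (T.trans hxu' hub')
        have hmem : (x, b) ∈ s := by
          rw [hs, Finset.mem_filter]; exact ⟨Finset.mem_univ _, hxb, hTM⟩
        exact (le_def.mp (Finset.inf_le hmem) hxy).2 ⟨le_rfl, hxb, hby⟩
      · refine Finset.le_inf fun p hp => ?_
        rw [hs, Finset.mem_filter] at hp
        exact hp.2.2
    obtain ⟨p, hp, hpT⟩ := hT.finset_inf_eq hinf
    rw [hs, Finset.mem_filter] at hp
    exact ⟨p.1, p.2, hp.2.1, hpT.symm⟩
  · rintro ⟨a, b, hab, rfl⟩
    exact infIrred_M hab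

theorem M_inj {a b a' b' : Fin (n + 1)} (h : a < b) (h' : a' < b')
    (he : M a b = M a' b') : a = a' ∧ b = b' := by
  have h1 : ¬ (M a' b').rel a b := he ▸ not_M_rel h
  have h2 : ¬ (M a b).rel a' b' := he.symm ▸ not_M_rel h'
  have k1 : a' ≤ a ∧ a < b' ∧ b' ≤ b := by
    by_contra hc; exact h1 ⟨h.le, hc⟩
  have k2 : a ≤ a' ∧ a' < b ∧ b ≤ b' := by
    by_contra hc; exact h2 ⟨h'.le, hc⟩
  exact ⟨le_antisymm k2.1 k1.1, le_antisymm k2.2.2 k1.2.2⟩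

/-- Counting pairs `i < j` in `Fin m`. -/
def pairEquiv (m : ℕ) : {p : Fin m × Fin m // p.1 < p.2} ≃ Σ j : Fin m, Fin (j : ℕ) where
  toFun p := ⟨p.1.2, ⟨p.1.1.1, p.2⟩⟩
  invFun q := ⟨(⟨q.2.1, lt_trans q.2.2 q.1.2⟩, q.1), q.2.2⟩
  left_inv := by rintro ⟨⟨i, j⟩, h⟩; rfl
  right_inv := by rintro ⟨j, k⟩; rfl

theorem card_pairs (m : ℕ) :
    Nat.card {p : Fin m × Fin m // p.1 < p.2} = m * (m - 1) / 2 := by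
  rw [Nat.card_eq_fintype_card, Fintype.card_congr (pairEquiv m), Fintype.card_sigma]
  simp only [Fintype.card_fin]
  rw [Fin.sum_univ_eq_sum_range (fun j => j) m, Finset.sum_range_id]

end CardIrredChainAux

/-- For `n ≥ 1`, the numbers of join-irreducible and of meet-irreducible
elements of `Tr([n])` both equal `C(n+1, 2) = n(n+1)/2`. -/
theorem card_irred_chain (n : ℕ) (hn : 1 ≤ n) :
    Nat.card {T : TransferSystem (Fin (n + 1)) // SupIrred T} = n * (n + 1) / 2 ∧
    Nat.card {T : TransferSystem (Fin (n + 1)) // InfIrred T} = n * (n + 1) / 2 ∧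
    n * (n + 1) / 2 = (n + 1).choose 2 := by

  have hJ : Nat.card {p : Fin (n + 1) × Fin (n + 1) // p.1 < p.2}
      = Nat.card {T : TransferSystem (Fin (n + 1)) // SupIrred T} := by
    apply Nat.card_eq_of_bijective
      (fun p : {p : Fin (n + 1) × Fin (n + 1) // p.1 < p.2} =>
        (⟨CardIrredChainAux.J p.1.1 p.1.2, CardIrredChainAux.supIrred_J p.2⟩ :
          {T : TransferSystem (Fin (n + 1)) // SupIrred T}))
    constructor
    · rintro ⟨⟨a, b⟩, hab⟩ ⟨⟨a', b'⟩, hab'⟩ h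
      have := CardIrredChainAux.J_inj hab hab' (Subtype.ext_iff.mp h)
      exact Subtype.ext (Prod.ext this.1 this.2)
    · rintro ⟨T, hT⟩
      obtain ⟨a, b, hab, rfl⟩ := CardIrredChainAux.supIrred_iff.mp hT
      exact ⟨⟨(a, b), hab⟩, rfl⟩
  have hM : Nat.card {p : Fin (n + 1) × Fin (n + 1) // p.1 < p.2}
      = Nat.card {T : TransferSystem (Fin (n + 1)) // InfIrred T} := by
    apply Nat.card_eq_of_bijective
      (fun p : {p : Fin (n + 1) × Fin (n + 1) // p.1 < p.2} =>
        (⟨CardIrredChainAux.M p.1.1 p.1.2, CardIrredChainAux.infIrred_M p.2⟩ :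
          {T : TransferSystem (Fin (n + 1)) // InfIrred T}))
    constructor
    · rintro ⟨⟨a, b⟩, hab⟩ ⟨⟨a', b'⟩, hab'⟩ h
      have := CardIrredChainAux.M_inj hab hab' (Subtype.ext_iff.mp h)
      exact Subtype.ext (Prod.ext this.1 this.2)
    · rintro ⟨T, hT⟩
      obtain ⟨a, b, hab, rfl⟩ := CardIrredChainAux.infIrred_iff.mp hT
      exact ⟨⟨(a, b), hab⟩, rfl⟩
  have hcard : Nat.card {p : Fin (n + 1) × Fin (n + 1) // p.1 < p.2} = n * (n + 1) / 2 := by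
    rw [CardIrredChainAux.card_pairs, Nat.add_sub_cancel, Nat.mul_comm]
  refine ⟨hJ ▸ hcard, hM ▸ hcard, ?_⟩
  rw [Nat.choose_two_right, Nat.add_sub_cancel, Nat.mul_comm]
end

section
/- Let n ≥ 1. Then the codensity of the lattice of transfer systems on the chain [n] satisfies ρ(Tr([n])) = (n+2)(n+3)/(6n(n+1)). Consequently, ρ(Tr([n])) tends to 1/6 as n tends to infinity. -/
----------------------------------------------------------------
-- auxiliary development
namespace CodAux
open TransferSystem

variable {n : ℕ}

abbrev TS (n : ℕ) := TransferSystem (Fin (n + 1))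

/-- chain restriction -/
theorem crel (S : TS n) {x y z : Fin (n+1)} (h : S.rel x y) (hxz : x ≤ z) (hzy : z ≤ y) :
    S.rel x z := by
  have := S.restrict h hzy
  rwa [inf_eq_left.mpr hxz] at this

theorem le_def {S T : TS n} : S ≤ T ↔ ∀ ⦃x y : Fin (n+1)⦄, S.rel x y → T.rel x y := Iff.rfl

open Classical in
/-- The largest element related to `i`. -/
noncomputable def mx (S : TS n) (i : Fin (n+1)) : Fin (n+1) :=
  (Finset.univ.filter (fun j => S.rel i j)).max' ⟨i, by simp [S.refl i]⟩

theorem rel_mx (S : TS n) (i : Fin (n+1)) : S.rel i (mx S i) := by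
  classical
  have := Finset.max'_mem (Finset.univ.filter (fun j => S.rel i j)) ⟨i, by simp [S.refl i]⟩
  simpa [mx] using this

theorem le_mx (S : TS n) {i y : Fin (n+1)} (h : S.rel i y) : y ≤ mx S i := by
  classical
  exact Finset.le_max' _ y (by simpa using h)

theorem self_le_mx (S : TS n) (i : Fin (n+1)) : i ≤ mx S i := S.le_of_rel (rel_mx S i)

theorem rel_of_le_mx (S : TS n) {i y : Fin (n+1)} (h1 : i ≤ y) (h2 : y ≤ mx S i) :
    S.rel i y := crel S (rel_mx S i) h1 h2

theorem rel_iff_mx (S : TS n) (x y : Fin (n+1)) :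
    S.rel x y ↔ x ≤ y ∧ y ≤ mx S x :=
  ⟨fun h => ⟨S.le_of_rel h, le_mx S h⟩, fun h => rel_of_le_mx S h.1 h.2⟩

theorem mx_valid (S : TS n) {i j : Fin (n+1)} (hij : i ≤ j) (hj : j ≤ mx S i) :
    mx S j ≤ mx S i :=
  le_mx S (S.trans (rel_of_le_mx S hij hj) (rel_mx S j))

theorem eq_of_mx_eq {S T : TS n} (h : mx S = mx T) : S = T := by
  apply ext'; funext x y
  exact propext (by rw [rel_iff_mx, rel_iff_mx, h])

/-- join-irreducible generators -/
def dl (i j : Fin (n+1)) : TS n where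
  rel x y := x = y ∨ (x = i ∧ i ≤ y ∧ y ≤ j)
  refl x := Or.inl rfl
  trans := by
    rintro x y z (rfl | ⟨rfl, h1, h2⟩) (rfl | ⟨rfl, h3, h4⟩)
    · exact Or.inl rfl
    · exact Or.inr ⟨rfl, h3, h4⟩
    · exact Or.inr ⟨rfl, h1, h2⟩
    · exact Or.inr ⟨rfl, h3, h4⟩
  le_of_rel := by
    rintro x y (rfl | ⟨rfl, h1, h2⟩)
    · exact le_refl _
    · exact h1
  restrict := by
    rintro x y x' (rfl | ⟨rfl, h1, h2⟩) hle
    · left; exact inf_eq_right.mpr hle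
    · rcases le_total x' x with h | h
      · left; exact inf_eq_right.mpr h
      · right
        exact ⟨inf_eq_left.mpr h, h, hle.trans h2⟩

def botTS : TS n where
  rel x y := x = y
  refl _ := rfl
  trans h1 h2 := h1.trans h2
  le_of_rel h := le_of_eq h
  restrict := by rintro x y x' rfl hle; exact inf_eq_right.mpr hle

def topTS : TS n where
  rel x y := x ≤ y
  refl x := le_refl x
  trans h1 h2 := h1.trans h2
  le_of_rel h := h
  restrict _ _ := inf_le_right

theorem botTS_le (S : TS n) : botTS ≤ S := by
  rintro x y (rfl : x = y); exact S.refl x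

theorem le_topTS (S : TS n) : S ≤ topTS := fun x y h => S.le_of_rel h

theorem dl_rel_self {i j : Fin (n+1)} (hij : i ≤ j) : (dl i j).rel i j :=
  Or.inr ⟨rfl, hij, le_refl _⟩

theorem dl_le_iff {i j : Fin (n+1)} (hij : i ≤ j) (S : TS n) :
    dl i j ≤ S ↔ S.rel i j := by
  constructor
  · intro h; exact h (dl_rel_self hij)
  · rintro h x y (rfl | ⟨rfl, h1, h2⟩)
    · exact S.refl x
    · exact crel S h h1 h2

/-- meet-irreducible generators -/
def mb (a b : Fin (n+1)) : TS n where
  rel x y := x ≤ y ∧ (a ≤ x → x ≤ b → y ≤ b)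
  refl x := ⟨le_refl x, fun _ h => h⟩
  trans := by
    rintro x y z ⟨hxy, h1⟩ ⟨hyz, h2⟩
    exact ⟨hxy.trans hyz, fun hax hxb => h2 (hax.trans hxy) (h1 hax hxb)⟩
  le_of_rel h := h.1
  restrict := by
    rintro x y x' ⟨hxy, h1⟩ hle
    refine ⟨inf_le_right, fun ha hb => ?_⟩
    rcases le_total x x' with h | h
    · rw [inf_eq_left.mpr h] at ha hb
      exact hle.trans (h1 ha hb)
    · rw [inf_eq_right.mpr h] at ha hb
      exact hb

theorem mb_rel {a b x y : Fin (n+1)} :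
    (mb a b).rel x y ↔ x ≤ y ∧ (a ≤ x → x ≤ b → y ≤ b) := Iff.rfl

theorem dl_le_mb_iff {i j a b : Fin (n+1)} (hij : i ≤ j) :
    dl i j ≤ mb a b ↔ (i ≤ j ∧ (a ≤ i → i ≤ b → j ≤ b)) := by
  rw [dl_le_iff hij]; rfl
theorem dl_inj {i j i' j' : Fin (n+1)} (h1 : i < j) (h2 : i' < j')
    (he : dl (n := n) i j = dl i' j') : i = i' ∧ j = j' := by
  have r1 : (dl i' j').rel i j := he ▸ dl_rel_self h1.le
  have r2 : (dl i j).rel i' j' := he ▸ dl_rel_self h2.le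
  rcases r1 with h | ⟨rfl, _, hj⟩
  · exact absurd h h1.ne
  rcases r2 with h | ⟨_, _, hj'⟩
  · exact absurd h h2.ne
  · exact ⟨rfl, le_antisymm hj hj'⟩

theorem supIrred_dl {i j : Fin (n+1)} (hij : i < j) : SupIrred (dl (n := n) i j) := by
  constructor
  · intro hmin
    have h1 : botTS ≤ dl i j := botTS_le _
    have h2 := hmin h1
    have : (dl i j).rel i j := dl_rel_self hij.le
    have := h2 this
    exact absurd this hij.ne
  · intro T U hTU
    have hT : T ≤ dl i j := hTU ▸ le_sup_left
    have hU : U ≤ dl i j := hTU ▸ le_sup_right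
    -- comparability of elements below dl
    have key : T ≤ U ∨ U ≤ T := by
      by_cases h : T ≤ U
      · exact Or.inl h
      · right
        rw [le_def] at h; push_neg at h
        obtain ⟨x0, y0, hx0, hy0⟩ := h
        rcases hT hx0 with heq | ⟨rfl, hi0, hj0⟩
        · exact absurd (heq ▸ U.refl x0) hy0
        intro x y hxy
        rcases hU hxy with rfl | ⟨rfl, hiy, hyj⟩
        · exact T.refl x
        rcases le_total y y0 with h | h
        · exact crel T hx0 hiy h
        · exact absurd (crel U hxy hi0 h) hy0
    rcases key with h | h
    · right; rw [sup_eq_right.mpr h] at hTU; exact hTU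
    · left; rw [sup_eq_left.mpr h] at hTU; exact hTU

/-- zero out the relations from `i0` -/
def drop (S : TS n) (i0 : Fin (n+1)) : TS n where
  rel x y := S.rel x y ∧ (x = i0 → y = i0)
  refl x := ⟨S.refl x, fun h => h⟩
  trans := by
    rintro x y z ⟨h1, h1'⟩ ⟨h2, h2'⟩
    exact ⟨S.trans h1 h2, fun hx => h2' (h1' hx)⟩
  le_of_rel h := S.le_of_rel h.1
  restrict := by
    rintro x y x' ⟨h1, h1'⟩ hle
    refine ⟨S.restrict h1 hle, fun hi => ?_⟩
    rcases le_total x x' with h | h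
    · rw [inf_eq_left.mpr h] at hi
      subst hi
      have hyx : y = x := h1' rfl
      exact le_antisymm (hle.trans hyx.le) h
    · rwa [inf_eq_right.mpr h] at hi

theorem supIrred_iff (S : TS n) :
    SupIrred S ↔ ∃ i j : Fin (n+1), i < j ∧ S = dl i j := by
  constructor
  · intro hS
    by_contra hne
    push_neg at hne
    by_cases hbot : ∀ x y : Fin (n+1), S.rel x y → x = y
    · -- S is the bottom, hence IsMin
      exact hS.1 (fun T _ x y hxy => (hbot x y hxy) ▸ T.refl x)
    · push_neg at hbot
      obtain ⟨x0, y0, hxy0, hne0⟩ := hbot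
      have hlt : x0 < mx S x0 :=
        lt_of_lt_of_le (lt_of_le_of_ne (S.le_of_rel hxy0) hne0) (le_mx S hxy0)
      set i0 := x0
      have hUS : dl i0 (mx S i0) ≤ S := (dl_le_iff hlt.le S).mpr (rel_mx S i0)
      have hTS : drop S i0 ≤ S := fun x y h => h.1
      have hsup : drop S i0 ⊔ dl i0 (mx S i0) = S := by
        apply le_antisymm (sup_le hTS hUS)
        intro x y hxy
        by_cases hx : x = i0
        · subst hx
          exact (le_sup_right : dl i0 (mx S i0) ≤ _)
            (Or.inr ⟨rfl, S.le_of_rel hxy, le_mx S hxy⟩)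
        · exact (le_sup_left : drop S i0 ≤ _) ⟨hxy, fun h => absurd h hx⟩
      rcases hS.2 hsup with h | h
      · -- drop S i0 = S is impossible
        have : (drop S i0).rel i0 (mx S i0) := h.symm ▸ rel_mx S i0
        exact absurd (this.2 rfl) hlt.ne'
      · exact hne i0 (mx S i0) hlt h.symm
  · rintro ⟨i, j, hij, rfl⟩
    exact supIrred_dl hij
theorem mb_rel_last {a b x : Fin (n+1)} (hb : b < Fin.last n) :
    (mb a b).rel x (Fin.last n) ↔ ¬(a ≤ x ∧ x ≤ b) := by
  rw [mb_rel]
  constructor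
  · rintro ⟨-, h⟩ ⟨h1, h2⟩
    exact absurd (h h1 h2) (not_le.mpr hb)
  · intro h
    refine ⟨Fin.le_last x, fun h1 h2 => absurd ⟨h1, h2⟩ h⟩

theorem mb_inj {a b a' b' : Fin (n+1)} (h1 : a ≤ b) (hb : b < Fin.last n)
    (h2 : a' ≤ b') (hb' : b' < Fin.last n) (he : mb (n := n) a b = mb a' b') :
    a = a' ∧ b = b' := by
  have key : ∀ x : Fin (n+1), (a ≤ x ∧ x ≤ b) ↔ (a' ≤ x ∧ x ≤ b') := by
    intro x
    rw [← not_iff_not, ← mb_rel_last hb, ← mb_rel_last hb', he]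
  have ha := (key a).mp ⟨le_refl a, h1⟩
  have ha' := (key a').mpr ⟨le_refl a', h2⟩
  have hbb := (key b).mp ⟨h1, le_refl b⟩
  have hbb' := (key b').mpr ⟨h2, le_refl b'⟩
  exact ⟨le_antisymm ha'.1 ha.1, le_antisymm hbb.2 hbb'.2⟩

/-- the unique cover of `mb a b` : raise `a` to the top -/
def mbCover (a b : Fin (n+1)) : TS n where
  rel x y := x ≤ y ∧ (a ≤ x → x ≤ b → x = a ∨ y ≤ b)
  refl x := ⟨le_refl x, fun _ h => Or.inr h⟩
  trans := by
    rintro x y z ⟨hxy, h1⟩ ⟨hyz, h2⟩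
    refine ⟨hxy.trans hyz, fun hax hxb => ?_⟩
    rcases h1 hax hxb with h | h
    · exact Or.inl h
    · rcases h2 (hax.trans hxy) h with h' | h'
      · exact Or.inl (le_antisymm (h' ▸ hxy) hax)
      · exact Or.inr h'
  le_of_rel h := h.1
  restrict := by
    rintro x y x' ⟨hxy, h1⟩ hle
    refine ⟨inf_le_right, fun ha hb => ?_⟩
    rcases le_total x' x with h | h
    · rw [inf_eq_right.mpr h] at ha hb ⊢
      exact Or.inr hb
    · rw [inf_eq_left.mpr h] at ha hb ⊢
      rcases h1 ha hb with h' | h'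
      · exact Or.inl h'
      · exact Or.inr (hle.trans h')

theorem mb_le_mbCover (a b : Fin (n+1)) : mb (n := n) a b ≤ mbCover a b := by
  rintro x y ⟨hxy, h⟩
  exact ⟨hxy, fun h1 h2 => Or.inr (h h1 h2)⟩

theorem mbCover_rel_a_last (a b : Fin (n+1)) (hab : a ≤ b) :
    (mbCover (n := n) a b).rel a (Fin.last n) :=
  ⟨Fin.le_last a, fun _ _ => Or.inl rfl⟩

/-- key: any transfer system strictly above `mb a b` contains its cover -/
theorem mbCover_le_of_gt {a b : Fin (n+1)} (hab : a ≤ b) (hb : b < Fin.last n)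
    {T : TS n} (hle : mb a b ≤ T) (hne : T ≠ mb a b) : mbCover a b ≤ T := by
  -- obtain an extra pair
  have hex : ∃ x y, T.rel x y ∧ a ≤ x ∧ x ≤ b ∧ b < y := by
    by_contra hc
    push_neg at hc
    apply hne
    apply le_antisymm _ hle
    intro x y hxy
    refine ⟨T.le_of_rel hxy, fun h1 h2 => ?_⟩
    by_contra hyb
    exact absurd (hc x y hxy h1 h2) (by simpa using not_le.mp hyb)
  obtain ⟨x, y, hxy, hax, hxb, hby⟩ := hex
  -- b+1
  have hbn : (b : ℕ) + 1 < n + 1 := by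
    have := hb
    simp [Fin.lt_def, Fin.last] at this
    omega
  set bs : Fin (n+1) := ⟨(b : ℕ) + 1, hbn⟩ with hbs
  have hbbs : b < bs := by simp [Fin.lt_def, hbs]
  have hbsy : bs ≤ y := by
    simp only [Fin.le_def, hbs]
    exact hby
  -- T.rel bs last
  have h1 : T.rel bs (Fin.last n) :=
    hle ⟨Fin.le_last bs, fun _ h => absurd (lt_of_lt_of_le hbbs h) (lt_irrefl b)⟩
  -- T.rel x bs
  have h2 : T.rel x bs := crel T hxy (hxb.trans hbbs.le) hbsy
  have h3 : T.rel x (Fin.last n) := T.trans h2 h1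
  -- T.rel a x
  have h4 : T.rel a x := hle ⟨hax, fun _ _ => hxb⟩
  have h5 : T.rel a (Fin.last n) := T.trans h4 h3
  -- conclude
  rintro u v ⟨huv, hcl⟩
  by_cases hu : a ≤ u ∧ u ≤ b
  · rcases hcl hu.1 hu.2 with rfl | hvb
    · exact crel T h5 huv (Fin.le_last v)
    · exact hle ⟨huv, fun _ _ => hvb⟩
  · exact hle ⟨huv, fun h1 h2 => absurd ⟨h1, h2⟩ hu⟩

theorem infIrred_mb {a b : Fin (n+1)} (hab : a ≤ b) (hb : b < Fin.last n) :
    InfIrred (mb (n := n) a b) := by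
  constructor
  · intro hmax
    have h1 := hmax (le_topTS (mb a b))
    have h2 : (mb a b).rel a (Fin.last n) := h1 (Fin.le_last a : (topTS (n := n)).rel a (Fin.last n))
    exact absurd (h2.2 (le_refl a) hab) (not_le.mpr hb)
  · intro T U hTU
    by_contra hc
    push_neg at hc
    have hT : mb a b ≤ T := hTU ▸ inf_le_left
    have hU : mb a b ≤ U := hTU ▸ inf_le_right
    have cT : mbCover a b ≤ T := mbCover_le_of_gt hab hb hT hc.1
    have cU : mbCover a b ≤ U := mbCover_le_of_gt hab hb hU hc.2
    have : mbCover a b ≤ mb a b := hTU ▸ le_inf cT cU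
    have := this (mbCover_rel_a_last a b hab)
    exact absurd (this.2 (le_refl a) hab) (not_le.mpr hb)
/-- raise the maximum at `i` to `v` -/
def raiseTS (S : TS n) (i v : Fin (n+1)) (hiv : i ≤ v)
    (Ha : ∀ j y, i < j → j ≤ v → S.rel j y → y ≤ v)
    (Hb : ∀ x, x < i → S.rel x i → S.rel x v) : TS n where
  rel x y := S.rel x y ∨ (x = i ∧ i ≤ y ∧ y ≤ v)
  refl x := Or.inl (S.refl x)
  trans := by
    rintro x y z (h1 | ⟨rfl, h1, h1'⟩) (h2 | ⟨rfl, h2, h2'⟩)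
    · exact Or.inl (S.trans h1 h2)
    · -- S.rel x i, then x = i or x < i
      rcases eq_or_lt_of_le (S.le_of_rel h1) with rfl | hlt
      · exact Or.inr ⟨rfl, h2, h2'⟩
      · exact Or.inl (crel S (Hb x hlt h1) (hlt.le.trans h2) h2')
    · -- x = i, i ≤ y ≤ v, S.rel y z
      rcases eq_or_lt_of_le h1 with rfl | hlt
      · exact Or.inl h2
      · exact Or.inr ⟨rfl, h1.trans (S.le_of_rel h2), Ha _ _ hlt h1' h2⟩
    · exact Or.inr ⟨rfl, h1.trans h2, h2'⟩
  le_of_rel := by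
    rintro x y (h | ⟨rfl, h1, _⟩)
    · exact S.le_of_rel h
    · exact h1
  restrict := by
    rintro x y x' (h | ⟨rfl, h1, h1'⟩) hle
    · exact Or.inl (S.restrict h hle)
    · rcases le_total x' x with h | h
      · rw [inf_eq_right.mpr h]; exact Or.inl (S.refl x')
      · rw [inf_eq_left.mpr h]
        exact Or.inr ⟨rfl, h, hle.trans h1'⟩

theorem le_raiseTS (S : TS n) (i v : Fin (n+1)) (hiv : i ≤ v) (Ha) (Hb) :
    S ≤ raiseTS S i v hiv Ha Hb := fun _ _ h => Or.inl h

theorem raiseTS_ne (S : TS n) (i v : Fin (n+1)) (hiv : i ≤ v) (Ha) (Hb)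
    (hnv : ¬ S.rel i v) : raiseTS S i v hiv Ha Hb ≠ S := by
  intro h
  have : (raiseTS S i v hiv Ha Hb).rel i v := Or.inr ⟨rfl, hiv, le_refl v⟩
  rw [h] at this
  exact hnv this

theorem raiseTS_inf (S : TS n) (i1 v1 i2 v2 : Fin (n+1)) (h1 : i1 ≤ v1) (h2 : i2 ≤ v2)
    (Ha1) (Hb1) (Ha2) (Hb2) (hne : i1 ≠ i2) :
    raiseTS S i1 v1 h1 Ha1 Hb1 ⊓ raiseTS S i2 v2 h2 Ha2 Hb2 = S := by
  apply le_antisymm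
  · intro x y h
    have hl : (raiseTS S i1 v1 h1 Ha1 Hb1).rel x y :=
      (inf_le_left : _ ⊓ raiseTS S i2 v2 h2 Ha2 Hb2 ≤ _) h
    have hr : (raiseTS S i2 v2 h2 Ha2 Hb2).rel x y :=
      (inf_le_right : raiseTS S i1 v1 h1 Ha1 Hb1 ⊓ _ ≤ _) h
    rcases hl with h | ⟨rfl, _, _⟩
    · exact h
    rcases hr with h | ⟨he, _, _⟩
    · exact h
    · exact absurd he hne
  · exact le_inf (le_raiseTS _ _ _ _ _ _) (le_raiseTS _ _ _ _ _ _)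

theorem mx_eq_last_of_not_lt {S : TS n} {x : Fin (n+1)} (h : ¬ mx S x < Fin.last n) :
    mx S x = Fin.last n := le_antisymm (Fin.le_last _) (not_lt.mp h)

theorem infIrred_iff (S : TS n) :
    InfIrred S ↔ ∃ a b : Fin (n+1), a ≤ b ∧ b < Fin.last n ∧ S = mb a b := by
  constructor
  · rintro ⟨hmax, hmeet⟩
    by_contra hne
    push_neg at hne
    by_cases htop : ∀ x y : Fin (n+1), x ≤ y → S.rel x y
    · exact hmax (fun T _ x y hxy => htop x y (T.le_of_rel hxy))
    · push_neg at htop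
      obtain ⟨x0, y0, hxy0, hnrel0⟩ := htop
      classical
      -- the first index whose max is not the top
      have hA : (Finset.univ.filter (fun i => mx S i < Fin.last n)).Nonempty := by
        refine ⟨x0, ?_⟩
        simp only [Finset.mem_filter, Finset.mem_univ, true_and]
        have : ¬ y0 ≤ mx S x0 := fun h => hnrel0 (rel_of_le_mx S hxy0 h)
        exact lt_of_lt_of_le (not_le.mp this) (Fin.le_last y0)
      set a := (Finset.univ.filter (fun i => mx S i < Fin.last n)).min' hA with hadef
      have ha : mx S a < Fin.last n := by
        have := Finset.min'_mem _ hA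
        simpa using this
      have hminA : ∀ x, x < a → mx S x = Fin.last n := by
        intro x hx
        apply mx_eq_last_of_not_lt
        intro hlt
        have : a ≤ x := Finset.min'_le _ x (by simpa using hlt)
        exact absurd hx (not_lt.mpr this)
      set b := mx S a with hbdef
      have hab : a ≤ b := self_le_mx S a
      -- first raise : a to the top
      have Hb0 : ∀ x, x < a → S.rel x a → S.rel x (Fin.last n) := by
        intro x hx _
        exact rel_of_le_mx S (Fin.le_last x) (hminA x hx).ge
      have Ha0 : ∀ j y, a < j → j ≤ Fin.last n → S.rel j y → y ≤ Fin.last n :=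
        fun j y _ _ _ => Fin.le_last y
      have hnv0 : ¬ S.rel a (Fin.last n) := fun h => absurd (le_mx S h) (not_le.mpr ha)
      by_cases hcase : ∀ j, a < j → j ≤ b → mx S j = b
      · -- S agrees with mb a b on [a,b]; find an index above b
        have hA2 : (Finset.univ.filter (fun j => b < j ∧ mx S j < Fin.last n)).Nonempty := by
          by_contra hc
          rw [Finset.not_nonempty_iff_eq_empty] at hc
          have hall : ∀ j : Fin (n+1), b < j → mx S j = Fin.last n := by
            intro j hj
            apply mx_eq_last_of_not_lt
            intro hlt
            have : j ∈ Finset.univ.filter (fun j => b < j ∧ mx S j < Fin.last n) := by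
              simp [hj, hlt]
            simp [hc] at this
          -- then S = mb a b
          refine hne a b hab ha ?_
          apply ext'
          funext x y
          apply propext
          rw [rel_iff_mx, mb_rel]
          rcases lt_trichotomy x a with hx | rfl | hx
          · rw [hminA x hx]
            constructor
            · rintro ⟨h, -⟩; exact ⟨h, fun h1 _ => absurd hx (not_lt.mpr h1)⟩
            · rintro ⟨h, -⟩; exact ⟨h, Fin.le_last y⟩
          · constructor
            · rintro ⟨h, h'⟩; exact ⟨h, fun _ _ => h'⟩
            · rintro ⟨h, h'⟩; exact ⟨h, h' (le_refl a) hab⟩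
          · rcases le_or_gt x b with hxb | hxb
            · rw [hcase x hx hxb]
              constructor
              · rintro ⟨h, h'⟩; exact ⟨h, fun _ _ => h'⟩
              · rintro ⟨h, h'⟩; exact ⟨h, h' hx.le hxb⟩
            · rw [hall x hxb]
              constructor
              · rintro ⟨h, -⟩; exact ⟨h, fun _ h2 => absurd hxb (not_lt.mpr h2)⟩
              · rintro ⟨h, -⟩; exact ⟨h, Fin.le_last y⟩
        set j2 := (Finset.univ.filter (fun j => b < j ∧ mx S j < Fin.last n)).min' hA2 with hj2def
        have hj2 : b < j2 ∧ mx S j2 < Fin.last n :=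
          (Finset.mem_filter.mp (Finset.min'_mem _ hA2)).2
        have hminA2 : ∀ x, b < x → x < j2 → mx S x = Fin.last n := by
          intro x hbx hxj
          apply mx_eq_last_of_not_lt
          intro hlt
          have : j2 ≤ x := Finset.min'_le _ x (by simp [hbx, hlt])
          exact absurd hxj (not_lt.mpr this)
        have Hb2 : ∀ x, x < j2 → S.rel x j2 → S.rel x (Fin.last n) := by
          intro x hxj hrel
          rcases lt_trichotomy x a with hx | rfl | hx
          · exact rel_of_le_mx S (Fin.le_last x) (hminA x hx).ge
          · exact absurd (le_mx S hrel) (not_le.mpr hj2.1)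
          · rcases le_or_gt x b with hxb | hxb
            · rw [← hcase x hx hxb] at hj2
              exact absurd (le_mx S hrel) (not_le.mpr hj2.1)
            · exact rel_of_le_mx S (Fin.le_last x) (hminA2 x hxb hxj).ge
        have Ha2 : ∀ j y, j2 < j → j ≤ Fin.last n → S.rel j y → y ≤ Fin.last n :=
          fun j y _ _ _ => Fin.le_last y
        have hnv2 : ¬ S.rel j2 (Fin.last n) := fun h => absurd (le_mx S h) (not_le.mpr hj2.2)
        have haj2 : a ≠ j2 := fun h => absurd (h ▸ lt_of_le_of_lt hab hj2.1) (lt_irrefl _)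
        rcases hmeet (raiseTS_inf S a (Fin.last n) j2 (Fin.last n)
            (Fin.le_last a) (Fin.le_last j2) Ha0 Hb0 Ha2 Hb2 haj2) with h | h
        · exact raiseTS_ne S a _ _ Ha0 Hb0 hnv0 h
        · exact raiseTS_ne S j2 _ _ Ha2 Hb2 hnv2 h
      · push_neg at hcase
        obtain ⟨j0, hj0a, hj0b, hj0ne⟩ := hcase
        have hj0lt : mx S j0 < b := lt_of_le_of_ne (mx_valid S hj0a.le hj0b) hj0ne
        have hA1 : (Finset.univ.filter
            (fun j => a < j ∧ j ≤ b ∧ mx S j < b)).Nonempty := ⟨j0, by simp [hj0a, hj0b, hj0lt]⟩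
        set j1 := (Finset.univ.filter (fun j => a < j ∧ j ≤ b ∧ mx S j < b)).min' hA1
        have hj1 : a < j1 ∧ j1 ≤ b ∧ mx S j1 < b :=
          (Finset.mem_filter.mp (Finset.min'_mem _ hA1)).2
        have hminA1 : ∀ x, a < x → x ≤ b → x < j1 → mx S x = b := by
          intro x h1 h2 h3
          rcases lt_or_ge (mx S x) b with hlt | hge
          · have : j1 ≤ x := Finset.min'_le _ x (by simp [h1, h2, hlt])
            exact absurd h3 (not_lt.mpr this)
          · exact le_antisymm (mx_valid S h1.le h2) hge
        have Hb1 : ∀ x, x < j1 → S.rel x j1 → S.rel x b := by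
          intro x hxj hrel
          rcases lt_trichotomy x a with hx | rfl | hx
          · exact rel_of_le_mx S ((hxj.le).trans hj1.2.1)
              ((hminA x hx).symm ▸ Fin.le_last b)
          · exact rel_of_le_mx S hab (le_refl b)
          · exact rel_of_le_mx S ((hxj.le).trans hj1.2.1)
              (hminA1 x hx (hxj.le.trans hj1.2.1) hxj).ge
        have Ha1 : ∀ j y, j1 < j → j ≤ b → S.rel j y → y ≤ b := by
          intro j y hj1j hjb hrel
          exact (le_mx S hrel).trans (mx_valid S (hj1.1.trans hj1j).le hjb)
        have hnv1 : ¬ S.rel j1 b := fun h => absurd (le_mx S h) (not_le.mpr hj1.2.2)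
        have haj1 : a ≠ j1 := fun h => absurd (h ▸ hj1.1) (lt_irrefl _)
        rcases hmeet (raiseTS_inf S a (Fin.last n) j1 b
            (Fin.le_last a) hj1.2.1 Ha0 Hb0 Ha1 Hb1 haj1) with h | h
        · exact raiseTS_ne S a _ _ Ha0 Hb0 hnv0 h
        · exact raiseTS_ne S j1 _ _ Ha1 Hb1 hnv1 h
  · rintro ⟨a, b, hab, hb, rfl⟩
    exact infIrred_mb hab hb
----------------------------------------------------------------
-- counting

def g2 (k : ℕ) : ℕ := ∑ i ∈ Finset.range k, (i + 1)
def g3 (k : ℕ) : ℕ := ∑ b ∈ Finset.range k, g2 (b + 1)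
def g4 (k : ℕ) : ℕ := ∑ j ∈ Finset.range k, g3 j

theorem two_g2 (k : ℕ) : 2 * g2 k = k * (k + 1) := by
  induction k with
  | zero => rfl
  | succ k ih =>
    rw [g2, Finset.sum_range_succ, ← g2, Nat.mul_add, ih]
    ring

theorem six_g3 (k : ℕ) : 6 * g3 k = k * (k + 1) * (k + 2) := by
  induction k with
  | zero => rfl
  | succ k ih =>
    rw [g3, Finset.sum_range_succ, ← g3, Nat.mul_add, ih]
    have h2 := two_g2 (k + 1)
    calc k * (k+1) * (k+2) + 6 * g2 (k+1) = k * (k+1) * (k+2) + 3 * (2 * g2 (k+1)) := by ring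
    _ = k * (k+1) * (k+2) + 3 * ((k+1) * (k+2)) := by rw [h2]
    _ = (k+1) * (k+2) * (k+3) := by ring

theorem tf_g4 (k : ℕ) : 24 * g4 (k + 1) = k * (k + 1) * (k + 2) * (k + 3) := by
  induction k with
  | zero => rfl
  | succ k ih =>
    rw [g4, Finset.sum_range_succ, ← g4, Nat.mul_add, ih]
    have h3 := six_g3 (k + 1)
    calc k*(k+1)*(k+2)*(k+3) + 24 * g3 (k+1) = k*(k+1)*(k+2)*(k+3) + 4 * (6 * g3 (k+1)) := by ring
    _ = k*(k+1)*(k+2)*(k+3) + 4 * ((k+1) * (k+2) * (k+3)) := by rw [h3]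
    _ = (k+1)*(k+2)*(k+3)*(k+4) := by ring

theorem sum_id_eq_g2 (m : ℕ) : ∑ j ∈ Finset.range (m + 1), j = g2 m := by
  rw [Finset.sum_range_succ' (fun j => j) m]
  simp [g2]

abbrev Jty (n : ℕ) := Σ j : Fin (n + 1), Fin j.val
abbrev Mty (n : ℕ) := Σ b : Fin n, Fin (b.val + 1)
abbrev Pty (n : ℕ) := Σ j : Fin (n + 1), Σ b : Fin j.val, Σ i : Fin (b.val + 1), Fin (i.val + 1)

theorem card_Jty (n : ℕ) : Fintype.card (Jty n) = g2 n := by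
  rw [Fintype.card_sigma]
  simp only [Fintype.card_fin]
  rw [Fin.sum_univ_eq_sum_range (fun j => j) (n + 1), sum_id_eq_g2]

theorem card_Mty (n : ℕ) : Fintype.card (Mty n) = g2 n := by
  rw [Fintype.card_sigma]
  simp only [Fintype.card_fin]
  rw [Fin.sum_univ_eq_sum_range (fun b => b + 1) n]
  rfl

theorem card_fin_succ_sum (m : ℕ) : ∑ i : Fin m, (i.val + 1) = g2 m := by
  rw [Fin.sum_univ_eq_sum_range (fun i => i + 1) m]; rfl

theorem card_Pty (n : ℕ) : Fintype.card (Pty n) = g4 (n + 1) := by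
  rw [Fintype.card_sigma]
  have h1 : ∀ j : Fin (n+1), Fintype.card (Σ b : Fin j.val, Σ i : Fin (b.val + 1), Fin (i.val + 1)) = g3 j.val := by
    intro j
    rw [Fintype.card_sigma]
    have h2 : ∀ b : Fin j.val, Fintype.card (Σ i : Fin (b.val + 1), Fin (i.val + 1)) = g2 (b.val + 1) := by
      intro b
      rw [Fintype.card_sigma]
      simp only [Fintype.card_fin]
      exact card_fin_succ_sum (b.val + 1)
    simp only [h2]
    rw [Fin.sum_univ_eq_sum_range (fun b => g2 (b + 1)) j.val]; rfl
  simp only [h1]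
  rw [Fin.sum_univ_eq_sum_range (fun j => g3 j) (n + 1)]; rfl
----------------------------------------------------------------
-- bijections

def jmap (n : ℕ) : Jty n → {S : TS n // SupIrred S} := fun ⟨j, i⟩ =>
  ⟨dl ⟨i.val, lt_trans i.2 j.2⟩ j,
    supIrred_dl (by simp only [Fin.lt_def]; exact i.2)⟩

theorem jmap_bij (n : ℕ) : Function.Bijective (jmap n) := by
  constructor
  · rintro ⟨j, i⟩ ⟨j', i'⟩ h
    have h' : dl (n := n) ⟨i.val, _⟩ j = dl ⟨i'.val, _⟩ j' := congrArg Subtype.val h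
    obtain ⟨h1, h2⟩ := dl_inj (by simp only [Fin.lt_def]; exact i.2)
      (by simp only [Fin.lt_def]; exact i'.2) h'
    subst h2
    have hiv : i.val = i'.val := by simpa using h1
    have : i = i' := Fin.ext hiv
    subst this
    rfl
  · rintro ⟨S, hS⟩
    obtain ⟨i, j, hij, rfl⟩ := (supIrred_iff S).mp hS
    refine ⟨⟨j, ⟨i.val, by rwa [← Fin.lt_def]⟩⟩, ?_⟩
    simp only [jmap, Subtype.mk.injEq]

def mmap (n : ℕ) : Mty n → {S : TS n // InfIrred S} := fun ⟨b, a⟩ =>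
  ⟨mb ⟨a.val, by omega⟩ ⟨b.val, by omega⟩,
    infIrred_mb (by simp only [Fin.le_def]; exact Nat.lt_succ_iff.mp a.2)
      (by simp only [Fin.lt_def, Fin.val_last]; exact b.2)⟩

theorem mmap_bij (n : ℕ) : Function.Bijective (mmap n) := by
  constructor
  · rintro ⟨b, a⟩ ⟨b', a'⟩ h
    have h' : mb (n := n) ⟨a.val, _⟩ ⟨b.val, _⟩ = mb ⟨a'.val, _⟩ ⟨b'.val, _⟩ :=
      congrArg Subtype.val h
    obtain ⟨h1, h2⟩ := mb_inj (by simp only [Fin.le_def]; exact Nat.lt_succ_iff.mp a.2)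
      (by simp only [Fin.lt_def, Fin.val_last]; exact b.2)
      (by simp only [Fin.le_def]; exact Nat.lt_succ_iff.mp a'.2)
      (by simp only [Fin.lt_def, Fin.val_last]; exact b'.2) h'
    have hbv : b.val = b'.val := by simpa using h2
    have hb : b = b' := Fin.ext hbv
    subst hb
    have hav : a.val = a'.val := by simpa using h1
    have ha : a = a' := Fin.ext hav
    subst ha
    rfl
  · rintro ⟨S, hS⟩
    obtain ⟨a, b, hab, hb, rfl⟩ := (infIrred_iff S).mp hS
    have hbn : b.val < n := by rwa [Fin.lt_def, Fin.val_last] at hb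
    refine ⟨⟨⟨b.val, hbn⟩, ⟨a.val, Nat.lt_succ_iff.mpr (by rwa [← Fin.le_def])⟩⟩, ?_⟩
    simp only [mmap, Subtype.mk.injEq]

def pmap (n : ℕ) : Pty n →
    {p : TS n × TS n // SupIrred p.1 ∧ InfIrred p.2 ∧ ¬ p.1 ≤ p.2} := fun ⟨j, b, i, a⟩ =>
  ⟨(dl ⟨i.val, by omega⟩ j, mb ⟨a.val, by omega⟩ ⟨b.val, by omega⟩), by
    have hib : i.val ≤ b.val := Nat.lt_succ_iff.mp i.2
    have hai : a.val ≤ i.val := Nat.lt_succ_iff.mp a.2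
    have hbj : b.val < j.val := b.2
    have hjn : j.val ≤ n := Nat.lt_succ_iff.mp j.2
    refine ⟨supIrred_dl (by simp only [Fin.lt_def]; omega),
      infIrred_mb (by simp only [Fin.le_def]; omega)
        (by simp only [Fin.lt_def, Fin.val_last]; omega), ?_⟩
    rw [dl_le_mb_iff (by simp only [Fin.le_def]; omega)]
    rintro ⟨-, h⟩
    have := h (by simp only [Fin.le_def]; omega) (by simp only [Fin.le_def]; omega)
    rw [Fin.le_def] at this
    simp only [Fin.val_mk] at this
    omega⟩

theorem pmap_bij (n : ℕ) : Function.Bijective (pmap n) := by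
  constructor
  · rintro ⟨j, b, i, a⟩ ⟨j', b', i', a'⟩ h
    have h' := congrArg Subtype.val h
    have hdl : dl (n := n) ⟨i.val, _⟩ j = dl ⟨i'.val, _⟩ j' := congrArg Prod.fst h'
    have hmb : mb (n := n) ⟨a.val, _⟩ ⟨b.val, _⟩ = mb ⟨a'.val, _⟩ ⟨b'.val, _⟩ :=
      congrArg Prod.snd h'
    have hib : i.val ≤ b.val := Nat.lt_succ_iff.mp i.2
    have hai : a.val ≤ i.val := Nat.lt_succ_iff.mp a.2
    have hbj : b.val < j.val := b.2
    have hjn : j.val ≤ n := Nat.lt_succ_iff.mp j.2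
    have hib' : i'.val ≤ b'.val := Nat.lt_succ_iff.mp i'.2
    have hai' : a'.val ≤ i'.val := Nat.lt_succ_iff.mp a'.2
    have hbj' : b'.val < j'.val := b'.2
    have hjn' : j'.val ≤ n := Nat.lt_succ_iff.mp j'.2
    obtain ⟨h1, h2⟩ := dl_inj (i := ⟨i.val, by omega⟩) (i' := ⟨i'.val, by omega⟩)
      (by simp only [Fin.lt_def]; omega) (by simp only [Fin.lt_def]; omega) hdl
    obtain ⟨h3, h4⟩ := mb_inj (a := ⟨a.val, by omega⟩) (b := ⟨b.val, by omega⟩)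
      (a' := ⟨a'.val, by omega⟩) (b' := ⟨b'.val, by omega⟩)
      (by simp only [Fin.le_def]; omega) (by simp only [Fin.lt_def, Fin.val_last]; omega)
      (by simp only [Fin.le_def]; omega) (by simp only [Fin.lt_def, Fin.val_last]; omega) hmb
    subst h2
    have hbv : b.val = b'.val := by simpa using h4
    have hb : b = b' := Fin.ext hbv
    subst hb
    have hiv : i.val = i'.val := by simpa using h1
    have hi : i = i' := Fin.ext hiv
    subst hi
    have hav : a.val = a'.val := by simpa using h3
    have ha : a = a' := Fin.ext hav
    subst ha
    rfl
  · rintro ⟨⟨A, B⟩, hA, hB, hAB⟩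
    obtain ⟨i, j, hij, rfl⟩ := (supIrred_iff A).mp hA
    obtain ⟨a, b, hab, hb, rfl⟩ := (infIrred_iff B).mp hB
    rw [dl_le_mb_iff hij.le] at hAB
    push_neg at hAB
    obtain ⟨hai, hib, hbj⟩ := hAB hij.le
    rw [Fin.le_def] at hai hib
    rw [Fin.lt_def] at hbj hij
    refine ⟨⟨j, ⟨b.val, hbj⟩, ⟨i.val, by simp only [Fin.val_mk]; omega⟩,
      ⟨a.val, by simp only [Fin.val_mk]; omega⟩⟩, ?_⟩
    simp only [pmap, Subtype.mk.injEq, Prod.mk.injEq]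
theorem ncard_sup (n : ℕ) : Nat.card {S : TS n // SupIrred S} = g2 n := by
  rw [← Nat.card_eq_of_bijective (jmap n) (jmap_bij n), Nat.card_eq_fintype_card, card_Jty]

theorem ncard_inf (n : ℕ) : Nat.card {S : TS n // InfIrred S} = g2 n := by
  rw [← Nat.card_eq_of_bijective (mmap n) (mmap_bij n), Nat.card_eq_fintype_card, card_Mty]

theorem ncard_pairs (n : ℕ) :
    Nat.card {p : TS n × TS n // SupIrred p.1 ∧ InfIrred p.2 ∧ ¬ p.1 ≤ p.2} = g4 (n + 1) := by
  rw [← Nat.card_eq_of_bijective (pmap n) (pmap_bij n), Nat.card_eq_fintype_card, card_Pty]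

theorem cod_formula (n : ℕ) (hn : 1 ≤ n) :
    codensity (TransferSystem (Fin (n + 1))) =
      ((n : ℚ) + 2) * ((n : ℚ) + 3) / (6 * n * ((n : ℚ) + 1)) := by
  have hx : (1 : ℚ) ≤ (n : ℚ) := by exact_mod_cast hn
  have hx0 : (n : ℚ) ≠ 0 := by linarith
  have hx1 : (n : ℚ) + 1 ≠ 0 := by linarith
  have hg2 : (g2 n : ℚ) = (n : ℚ) * ((n : ℚ) + 1) / 2 := by
    have := two_g2 n
    have h : (2 : ℚ) * (g2 n : ℚ) = (n : ℚ) * ((n : ℚ) + 1) := by exact_mod_cast this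
    linarith
  have hg4 : (g4 (n + 1) : ℚ) = (n : ℚ) * ((n : ℚ) + 1) * ((n : ℚ) + 2) * ((n : ℚ) + 3) / 24 := by
    have := tf_g4 n
    have h : (24 : ℚ) * (g4 (n+1) : ℚ) =
        (n : ℚ) * ((n : ℚ) + 1) * ((n : ℚ) + 2) * ((n : ℚ) + 3) := by exact_mod_cast this
    linarith
  rw [codensity, ncard_pairs n, ncard_sup n, ncard_inf n, hg2, hg4]
  rw [div_eq_div_iff (by positivity) (by positivity)]
  ring

end CodAux

open Filter

/-- For `n ≥ 1`, `ρ(Tr([n])) = (n+2)(n+3)/(6n(n+1))`; consequently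
`ρ(Tr([n])) → 1/6` as `n → ∞`. -/
theorem codensity_chain :
    (∀ n : ℕ, 1 ≤ n →
      codensity (TransferSystem (Fin (n + 1))) =
        ((n : ℚ) + 2) * ((n : ℚ) + 3) / (6 * n * ((n : ℚ) + 1))) ∧
    Filter.Tendsto (fun n : ℕ => codensity (TransferSystem (Fin (n + 1))))
      Filter.atTop (nhds (1 / 6 : ℚ)) := by
  refine ⟨fun n hn => CodAux.cod_formula n hn, ?_⟩
  have h0 : Tendsto (fun n : ℕ => ((n : ℚ))⁻¹) atTop (nhds 0) :=
    tendsto_inv_atTop_zero.comp tendsto_natCast_atTop_atTop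
  have hh : Tendsto (fun n : ℕ =>
      ((1 + 2 * ((n : ℚ))⁻¹) * (1 + 3 * ((n : ℚ))⁻¹)) / (6 * (1 + ((n : ℚ))⁻¹)))
      atTop (nhds (((1 + 2 * 0) * (1 + 3 * 0)) / (6 * (1 + 0)))) := by
    apply Tendsto.div
    · exact ((tendsto_const_nhds.add (h0.const_mul 2)).mul
        (tendsto_const_nhds.add (h0.const_mul 3)))
    · exact tendsto_const_nhds.mul (tendsto_const_nhds.add h0)
    · norm_num
  have hlim : (((1 : ℚ) + 2 * 0) * (1 + 3 * 0)) / (6 * (1 + 0)) = 1 / 6 := by norm_num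
  rw [hlim] at hh
  apply hh.congr'
  filter_upwards [Filter.eventually_ge_atTop 1] with n hn
  rw [CodAux.cod_formula n hn]
  have hx : (1 : ℚ) ≤ (n : ℚ) := by exact_mod_cast hn
  have hx0 : (n : ℚ) ≠ 0 := by linarith
  field_simp
end

section
/- Let n, m ≥ 1. Then the codensity of the lattice of transfer systems on the product of chains [n] × [m] satisfies ρ(Tr([n] × [m])) = (m+2)(m+3)(n+2)(n+3)(3mn+4m+4n) / (36(m+1)(n+1)(2m+2n+mn)²). -/
namespace TransferSystem
variable {L : Type*} [Lattice L]

theorem le_def' {S T : TransferSystem L} : S ≤ T ↔ ∀ ⦃x y : L⦄, S.rel x y → T.rel x y := Iff.rfl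

theorem inf_rel_of {S T : TransferSystem L} {x y : L} (hS : S.rel x y) (hT : T.rel x y) :
    (S ⊓ T).rel x y := by
  have h1 : sInfTS {S, T} ≤ S := fun a b h => h.2 S (Set.mem_insert _ _)
  have h2 : sInfTS {S, T} ≤ T := fun a b h => h.2 T (Set.mem_insert_of_mem _ rfl)
  exact (le_inf h1 h2 : sInfTS {S, T} ≤ S ⊓ T)
    ⟨S.le_of_rel hS, by rintro U (rfl | rfl); exacts [hS, hT]⟩

/-- The complete transfer system. -/
def full : TransferSystem L where
  rel a b := a ≤ b
  refl a := le_rfl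
  trans h1 h2 := h1.trans h2
  le_of_rel h := h
  restrict _ h := inf_le_right

/-- The transfer system generated by a single pair. -/
def gen (x y : L) : TransferSystem L where
  rel a b := a = b ∨ (b ≤ y ∧ a = x ⊓ b)
  refl a := Or.inl rfl
  trans := by
    rintro a b c (rfl | ⟨hb, rfl⟩) (rfl | ⟨hc, rfl⟩)
    · exact Or.inl rfl
    · exact Or.inr ⟨hc, rfl⟩
    · exact Or.inr ⟨hb, rfl⟩
    · exact Or.inr ⟨hc, by rw [← inf_assoc, inf_idem]⟩
  le_of_rel := by rintro a b (rfl | ⟨hb, rfl⟩); exacts [le_rfl, inf_le_right]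
  restrict := by
    rintro a b a' (rfl | ⟨hb, rfl⟩) ha'
    · exact Or.inl (inf_eq_right.2 ha')
    · exact Or.inr ⟨ha'.trans hb, by rw [inf_assoc, inf_eq_right.2 ha']⟩

theorem gen_rel_self {x y : L} (h : x ≤ y) : (gen x y).rel x y :=
  Or.inr ⟨le_rfl, (inf_eq_left.2 h).symm⟩

theorem gen_le_iff {x y : L} (h : x ≤ y) {T : TransferSystem L} :
    gen x y ≤ T ↔ T.rel x y := by
  constructor
  · intro hT; exact hT (gen_rel_self h)
  · rintro hT a b (rfl | ⟨hb, rfl⟩)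
    exacts [T.refl a, T.restrict hT hb]

/-- The unique maximal transfer system strictly below `gen x y`. -/
def genBelow (x y : L) : TransferSystem L where
  rel a b := a = b ∨ (b ≤ y ∧ b ≠ y ∧ a = x ⊓ b)
  refl a := Or.inl rfl
  trans := by
    rintro a b c (rfl | ⟨hb, hb', rfl⟩) (rfl | ⟨hc, hc', rfl⟩)
    · exact Or.inl rfl
    · exact Or.inr ⟨hc, hc', rfl⟩
    · exact Or.inr ⟨hb, hb', rfl⟩
    · exact Or.inr ⟨hc, hc', by rw [← inf_assoc, inf_idem]⟩
  le_of_rel := by rintro a b (rfl | ⟨hb, hb', rfl⟩); exacts [le_rfl, inf_le_right]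
  restrict := by
    rintro a b a' (rfl | ⟨hb, hb', rfl⟩) ha'
    · exact Or.inl (inf_eq_right.2 ha')
    · refine Or.inr ⟨ha'.trans hb, fun he => hb' (le_antisymm hb (he ▸ ha')), ?_⟩
      rw [inf_assoc, inf_eq_right.2 ha']

theorem genBelow_le_gen {x y : L} : genBelow x y ≤ gen x y := by
  rintro a b (rfl | ⟨hb, _, rfl⟩)
  exacts [(gen x y).refl a, Or.inr ⟨hb, rfl⟩]

theorem not_genBelow_rel {x y : L} (hxy : x < y) : ¬ (genBelow x y).rel x y := by
  rintro (h | ⟨_, hne, _⟩)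
  exacts [hxy.ne h, hne rfl]

theorem le_genBelow {x y : L} (hxy : x ≤ y) {S : TransferSystem L}
    (hS : S ≤ gen x y) (h : ¬ S.rel x y) : S ≤ genBelow x y := by
  intro a b hr
  rcases hS hr with rfl | ⟨hb, rfl⟩
  · exact Or.inl rfl
  · rcases eq_or_ne b y with rfl | hne
    · rw [inf_eq_left.2 hxy] at hr; exact absurd hr h
    · exact Or.inr ⟨hb, hne, rfl⟩

theorem supIrred_gen {x y : L} (hxy : x < y) : SupIrred (gen x y) := by
  constructor
  · intro hmin
    exact not_genBelow_rel hxy (hmin genBelow_le_gen (gen_rel_self hxy.le))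
  · intro b c h
    by_contra hbc
    push_neg at hbc
    obtain ⟨hb, hc⟩ := hbc
    have hble : b ≤ gen x y := h ▸ le_sup_left
    have hcle : c ≤ gen x y := h ▸ le_sup_right
    have hbrel : ¬ b.rel x y := fun hr => hb (le_antisymm hble ((gen_le_iff hxy.le).2 hr))
    have hcrel : ¬ c.rel x y := fun hr => hc (le_antisymm hcle ((gen_le_iff hxy.le).2 hr))
    have : gen x y ≤ genBelow x y := by
      rw [← h]
      exact sup_le (le_genBelow hxy.le hble hbrel) (le_genBelow hxy.le hcle hcrel)
    exact not_genBelow_rel hxy (this (gen_rel_self hxy.le))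

theorem gen_inj {x y x' y' : L} (hxy : x < y) (hxy' : x' < y')
    (h : gen x y = gen x' y') : x = x' ∧ y = y' := by
  have h1 : (gen x y).rel x' y' := h ▸ gen_rel_self hxy'.le
  have h2 : (gen x' y').rel x y := h.symm ▸ gen_rel_self hxy.le
  rcases h1 with h1 | ⟨hy', hx'⟩
  · exact absurd h1 hxy'.ne
  rcases h2 with h2 | ⟨hy, hx⟩
  · exact absurd h2 hxy.ne
  have hyy : y = y' := le_antisymm hy hy'
  refine ⟨le_antisymm ?_ ?_, hyy⟩
  · rw [hx]; exact inf_le_left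
  · rw [hx']; exact inf_le_left

theorem supIrred_iff [Finite L] {T : TransferSystem L} :
    SupIrred T ↔ ∃ x y : L, x < y ∧ T = gen x y := by
  constructor
  · intro hT
    classical
    have hfin : (Set.image (fun p : L × L => gen p.1 p.2)
        {p : L × L | T.rel p.1 p.2 ∧ p.1 ≠ p.2}).Finite :=
      (Set.toFinite _).image _
    have hsup : hfin.toFinset.sup id = T := by
      apply le_antisymm
      · refine Finset.sup_le ?_
        intro S hS
        rw [Set.Finite.mem_toFinset] at hS
        obtain ⟨p, ⟨hp1, hp2⟩, rfl⟩ := hS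
        exact (gen_le_iff (T.le_of_rel hp1)).2 hp1
      · intro a b hab
        rcases eq_or_ne a b with rfl | hne
        · exact (hfin.toFinset.sup id).refl a
        · have hmem : gen a b ∈ hfin.toFinset := by
            rw [Set.Finite.mem_toFinset]
            exact ⟨(a, b), ⟨hab, hne⟩, rfl⟩
          exact (Finset.le_sup (f := id) hmem : gen a b ≤ _)
            (gen_rel_self (T.le_of_rel hab))
    obtain ⟨S, hS, hST⟩ := hT.finset_sup_eq hsup
    rw [Set.Finite.mem_toFinset] at hS
    obtain ⟨p, ⟨hp1, hp2⟩, rfl⟩ := hS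
    exact ⟨p.1, p.2, lt_of_le_of_ne (T.le_of_rel hp1) hp2, (hST.symm : T = _)⟩
  · rintro ⟨x, y, hxy, rfl⟩
    exact supIrred_gen hxy

/-- The maximal transfer system avoiding `x → y` (together with everything above). -/
def comax (x y : L) : TransferSystem L where
  rel a b := a ≤ b ∧ (y ≤ b → x ≤ a → y ≤ a)
  refl a := ⟨le_rfl, fun h _ => h⟩
  trans h1 h2 := ⟨h1.1.trans h2.1, fun hyc hxa => h1.2 (h2.2 hyc (hxa.trans h1.1)) hxa⟩
  le_of_rel h := h.1
  restrict h ha' := ⟨inf_le_right,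
    fun hya' hxa => le_inf (h.2 (hya'.trans ha') (hxa.trans inf_le_left)) hya'⟩

theorem comax_rel {x y a b : L} :
    (comax x y).rel a b ↔ a ≤ b ∧ (y ≤ b → x ≤ a → y ≤ a) := Iff.rfl

theorem not_comax_rel {x y : L} (hxy : x < y) : ¬ (comax x y).rel x y := by
  rintro ⟨_, h⟩
  exact hxy.not_ge (h le_rfl le_rfl)

theorem rel_of_comax_lt {x y : L} (hxy : x ≤ y) {S : TransferSystem L}
    (h : comax x y ≤ S) (hne : comax x y ≠ S) : S.rel x y := by
  have hex : ∃ a b, S.rel a b ∧ ¬ (comax x y).rel a b := by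
    by_contra hc
    push_neg at hc
    exact hne (le_antisymm h (le_def'.2 fun a b hab => hc a b hab))
  obtain ⟨a, b, hab, hnab⟩ := hex
  have hab' : a ≤ b := S.le_of_rel hab
  have h3 : y ≤ b ∧ x ≤ a ∧ ¬ y ≤ a := by
    by_contra hc
    push_neg at hc
    exact hnab ⟨hab', fun hyb hxa => hc hyb hxa⟩
  obtain ⟨hyb, hxa, hya⟩ := h3
  have h1 : S.rel (a ⊓ y) y := S.restrict hab hyb
  have h2 : S.rel x (a ⊓ y) := h (show (comax x y).rel x (a ⊓ y) from
    ⟨le_inf hxa hxy, fun hy _ => absurd (hy.trans inf_le_left) hya⟩)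
  exact S.trans h2 h1

theorem comax_le_full {x y : L} : comax x y ≤ (full : TransferSystem L) :=
  le_def'.2 fun a b h => h.1

theorem infIrred_comax {x y : L} (hxy : x < y) : InfIrred (comax x y) := by
  constructor
  · intro hmax
    exact not_comax_rel hxy
      ((hmax comax_le_full) (show (full : TransferSystem L).rel x y from hxy.le))
  · intro b c h
    by_contra hbc
    push_neg at hbc
    obtain ⟨hb, hc⟩ := hbc
    have hble : comax x y ≤ b := h ▸ inf_le_left
    have hcle : comax x y ≤ c := h ▸ inf_le_right
    have hbrel : b.rel x y := rel_of_comax_lt hxy.le hble (fun he => hb he.symm)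
    have hcrel : c.rel x y := rel_of_comax_lt hxy.le hcle (fun he => hc he.symm)
    have : (b ⊓ c).rel x y := inf_rel_of hbrel hcrel
    rw [h] at this
    exact not_comax_rel hxy this

theorem comax_inj {x y x' y' : L} (hxy : x < y) (hxy' : x' < y')
    (h : comax x y = comax x' y') : x = x' ∧ y = y' := by
  have key : ∀ {u v u' v' : L}, u' < v' → comax u v = comax u' v' → v ≤ v' ∧ u ≤ u' := by
    intro u v u' v' huv' hh
    by_contra hc
    have hn : ¬ (comax u v).rel u' v' := by rw [hh]; exact not_comax_rel huv'
    exact hn ⟨huv'.le, fun hv hu => (hc ⟨hv, hu⟩).elim⟩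
  obtain ⟨h1v, h1u⟩ := key hxy' h
  obtain ⟨h2v, h2u⟩ := key hxy h.symm
  exact ⟨le_antisymm h1u h2u, le_antisymm h1v h2v⟩

theorem le_comax_of_not_rel [Finite L] {T : TransferSystem L} {a b : L}
    (hab : a ≤ b) (hT : ¬ T.rel a b) :
    ∃ x y : L, x < y ∧ T ≤ comax x y ∧ ¬ (comax x y).rel a b := by
  classical
  have hne : ({d : L | d ≤ b ∧ ¬ T.rel (a ⊓ d) d}).Nonempty :=
    ⟨b, le_rfl, by rwa [inf_eq_left.2 hab]⟩
  obtain ⟨y, hy, hymin⟩ := Finset.exists_minimal (s := (Set.toFinite _).toFinset)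
    (by rwa [Set.Finite.toFinset_nonempty])
  rw [Set.Finite.mem_toFinset] at hy
  obtain ⟨hyb, hyrel⟩ := hy
  refine ⟨a ⊓ y, y,
    lt_of_le_of_ne inf_le_right (fun he => hyrel (by rw [he]; exact T.refl y)), ?_, ?_⟩
  · refine le_def'.2 fun c d hcd => ?_
    refine ⟨T.le_of_rel hcd, fun hyd hxc => ?_⟩
    by_contra hyc
    have h1 : T.rel (c ⊓ y) y := T.restrict hcd hyd
    have hlt : c ⊓ y < y := lt_of_le_of_ne inf_le_right (fun he => hyc (he ▸ inf_le_left))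
    have hnotmem : (c ⊓ y) ∉ (Set.toFinite {d : L | d ≤ b ∧ ¬ T.rel (a ⊓ d) d}).toFinset :=
      fun hmem => hlt.not_ge (hymin hmem hlt.le)
    rw [Set.Finite.mem_toFinset] at hnotmem
    have h2 : T.rel (a ⊓ (c ⊓ y)) (c ⊓ y) := by
      by_contra hc2
      exact hnotmem ⟨(inf_le_right).trans hyb, hc2⟩
    have heq : a ⊓ (c ⊓ y) = a ⊓ y := by
      rw [inf_left_comm, inf_eq_right.2 hxc]
    rw [heq] at h2
    exact hyrel (T.trans h2 h1)
  · rintro ⟨_, himp⟩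
    have hya := himp hyb inf_le_left
    exact hyrel (by rw [inf_eq_right.2 hya]; exact T.refl y)

theorem infIrred_iff [Finite L] {T : TransferSystem L} :
    InfIrred T ↔ ∃ x y : L, x < y ∧ T = comax x y := by
  constructor
  · intro hT
    classical
    have hfin : (Set.image (fun p : L × L => comax p.1 p.2)
        {p : L × L | p.1 < p.2 ∧ T ≤ comax p.1 p.2}).Finite :=
      (Set.toFinite _).image _
    have hinf : hfin.toFinset.inf id = T := by
      apply le_antisymm
      · refine le_def'.2 fun a b hr => ?_
        have hab : a ≤ b := (hfin.toFinset.inf id).le_of_rel hr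
        by_contra hTr
        obtain ⟨x, y, hxy, hle, hnrel⟩ := le_comax_of_not_rel hab hTr
        have hmem : comax x y ∈ hfin.toFinset := by
          rw [Set.Finite.mem_toFinset]
          exact ⟨(x, y), ⟨hxy, hle⟩, rfl⟩
        exact hnrel ((Finset.inf_le (f := id) hmem : _ ≤ comax x y) hr)
      · exact Finset.le_inf fun S hS => by
          rw [Set.Finite.mem_toFinset] at hS
          obtain ⟨p, ⟨hp1, hp2⟩, rfl⟩ := hS
          exact hp2
    obtain ⟨S, hS, hST⟩ := hT.finset_inf_eq hinf
    rw [Set.Finite.mem_toFinset] at hS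
    obtain ⟨p, ⟨hp1, _⟩, rfl⟩ := hS
    exact ⟨p.1, p.2, hp1, (hST.symm : T = _)⟩
  · rintro ⟨x, y, hxy, rfl⟩
    exact infIrred_comax hxy

theorem gen_le_comax_iff {a b x y : L} (hab : a ≤ b) :
    ¬ gen a b ≤ comax x y ↔ x ≤ a ∧ y ≤ b ∧ ¬ y ≤ a := by
  rw [gen_le_iff hab, comax_rel]
  constructor
  · intro h
    by_contra hc
    push_neg at hc
    exact h ⟨hab, fun hyb hxa => hc hxa hyb⟩
  · rintro ⟨hxa, hyb, hya⟩ ⟨_, himp⟩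
    exact hya (himp hyb hxa)

end TransferSystem

open Finset


section QSums

lemma qsum1 (t : ℕ) : ∑ i ∈ range t, ((i : ℚ) + 1) = (t : ℚ) * ((t : ℚ) + 1) / 2 := by
  induction t with
  | zero => simp
  | succ t ih => rw [Finset.sum_range_succ, ih]; push_cast; ring

lemma qsum2 (t : ℕ) : ∑ i ∈ range t, ((i : ℚ) + 1) ^ 2
    = (t : ℚ) * ((t : ℚ) + 1) * (2 * (t : ℚ) + 1) / 6 := by
  induction t with
  | zero => simp
  | succ t ih => rw [Finset.sum_range_succ, ih]; push_cast; ring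

lemma qsumH2 (s : ℕ) :
    ∑ j ∈ range s, ((j : ℚ) + 1) * ((j : ℚ) + 2) * (2 * (j : ℚ) + 3) / 6
      = (s : ℚ) * ((s : ℚ) + 1) ^ 2 * ((s : ℚ) + 2) / 12 := by
  induction s with
  | zero => simp
  | succ s ih => rw [Finset.sum_range_succ, ih]; push_cast; ring

lemma qsumP2 (s : ℕ) : ∑ a ∈ range s, ((a : ℚ) + 1) * ((a : ℚ) + 2)
    = (s : ℚ) * ((s : ℚ) + 1) * ((s : ℚ) + 2) / 3 := by
  induction s with
  | zero => simp
  | succ s ih => rw [Finset.sum_range_succ, ih]; push_cast; ring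

lemma qsumP3 (s : ℕ) : ∑ a ∈ range s, (a : ℚ) * ((a : ℚ) + 1) * ((a : ℚ) + 2)
    = ((s : ℚ) - 1) * (s : ℚ) * ((s : ℚ) + 1) * ((s : ℚ) + 2) / 4 := by
  induction s with
  | zero => norm_num
  | succ s ih => rw [Finset.sum_range_succ, ih]; push_cast; ring

end QSums

section NatSums

lemma sum_trunc {M : Type*} [AddCommMonoid M] (s x : ℕ) (hx : x ≤ s) (f : ℕ → M)
    (hf : ∀ b < x, f b = 0) :
    ∑ b ∈ range s, f b = ∑ i ∈ range (s - x), f (x + i) := by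
  have h1 : ∑ b ∈ Ico 0 s, f b = ∑ b ∈ Ico 0 x, f b + ∑ b ∈ Ico x s, f b :=
    (Finset.sum_Ico_consecutive _ (Nat.zero_le x) hx).symm
  have h2 : ∑ b ∈ Ico x s, f b = ∑ i ∈ range (s - x), f (x + i) :=
    Finset.sum_Ico_eq_sum_range f x s
  have h3 : ∑ b ∈ Ico 0 x, f b = 0 :=
    Finset.sum_eq_zero fun b hb => hf b (Finset.mem_Ico.1 hb).2
  calc ∑ b ∈ range s, f b = ∑ b ∈ Ico 0 s, f b := by rw [Finset.range_eq_Ico]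
    _ = ∑ i ∈ range (s - x), f (x + i) := by rw [h1, h2, h3, zero_add]

lemma sum_reflect' {M : Type*} [AddCommMonoid M] (s : ℕ) (g : ℕ → M) :
    ∑ x ∈ range s, g (s - x) = ∑ j ∈ range s, g (j + 1) := by
  have h := Finset.sum_range_reflect (fun j => g (j + 1)) s
  rw [← h]
  exact Finset.sum_congr rfl fun x hx => by
    rw [Finset.mem_range] at hx; congr 1; omega

lemma natsum_trunc_sq (s : ℕ) :
    ∑ x ∈ range s, ∑ b ∈ range s, (b + 1 - x) ^ 2
      = ∑ j ∈ range s, ∑ i ∈ range (j + 1), (i + 1) ^ 2 := by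
  have inner : ∀ x ∈ range s, ∑ b ∈ range s, (b + 1 - x) ^ 2
      = ∑ i ∈ range (s - x), (i + 1) ^ 2 := by
    intro x hx
    rw [Finset.mem_range] at hx
    rw [sum_trunc s x hx.le _ (fun b hb => by
      have h : b + 1 - x = 0 := by omega
      simp [h])]
    exact Finset.sum_congr rfl fun i _ => by congr 1; omega
  rw [Finset.sum_congr rfl inner]
  exact sum_reflect' s (fun t => ∑ i ∈ range t, (i + 1) ^ 2)

lemma natsum_trunc_tri (s : ℕ) :
    ∑ x ∈ range s, ∑ a ∈ range s, (a + 1 - x) * (s - a)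
      = ∑ a ∈ range s, (∑ i ∈ range (a + 1), (i + 1)) * (s - a) := by
  rw [Finset.sum_comm]
  refine Finset.sum_congr rfl fun a ha => ?_
  rw [Finset.mem_range] at ha
  rw [← Finset.sum_mul]
  congr 1
  have htail : ∑ x ∈ range s, (a + 1 - x) = ∑ x ∈ range (a + 1), (a + 1 - x) := by
    have h1 : ∑ x ∈ Ico 0 s, (a + 1 - x)
        = ∑ x ∈ Ico 0 (a + 1), (a + 1 - x) + ∑ x ∈ Ico (a + 1) s, (a + 1 - x) :=
      (Finset.sum_Ico_consecutive _ (Nat.zero_le (a + 1)) ha).symm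
    have h2 : ∑ x ∈ Ico (a + 1) s, (a + 1 - x) = 0 :=
      Finset.sum_eq_zero fun x hx => by
        rw [Finset.mem_Ico] at hx; omega
    calc ∑ x ∈ range s, (a + 1 - x) = ∑ x ∈ Ico 0 s, (a + 1 - x) := by
          rw [Finset.range_eq_Ico]
      _ = ∑ x ∈ Ico 0 (a + 1), (a + 1 - x) := by rw [h1, h2, add_zero]
      _ = ∑ x ∈ range (a + 1), (a + 1 - x) := by rw [Finset.range_eq_Ico]
  rw [htail]
  exact sum_reflect' (a + 1) (fun t => t)

end NatSums

section CoordCards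
open Finset

def e2 (s : ℕ) : {p : Fin s × Fin s // p.1 ≤ p.2} ≃ Σ x : Fin s, ↥(Finset.Ici x) where
  toFun p := ⟨p.val.1, ⟨p.val.2, Finset.mem_Ici.2 p.prop⟩⟩
  invFun q := ⟨(q.1, q.2.val), Finset.mem_Ici.1 q.2.prop⟩
  left_inv p := rfl
  right_inv q := rfl

lemma c2_card (s : ℕ) :
    (Fintype.card {p : Fin s × Fin s // p.1 ≤ p.2} : ℚ) = (s : ℚ) * ((s : ℚ) + 1) / 2 := by
  have h1 : Fintype.card {p : Fin s × Fin s // p.1 ≤ p.2} = ∑ j ∈ range s, (j + 1) := by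
    rw [Fintype.card_congr (e2 s), Fintype.card_sigma]
    have : ∀ x : Fin s, Fintype.card ↥(Finset.Ici x) = s - (x : ℕ) := fun x => by
      rw [Fintype.card_coe, Fin.card_Ici]
    rw [Fintype.sum_congr _ _ this, Fin.sum_univ_eq_sum_range (fun i => s - i) s]
    exact sum_reflect' s (fun t => t)
  rw [h1]
  push_cast
  exact qsum1 s

def eQ (s : ℕ) : {q : (Fin s × Fin s) × (Fin s × Fin s) //
      q.2.1 ≤ q.2.2 ∧ q.1.1 ≤ q.1.2 ∧ q.2.1 ≤ q.1.1 ∧ q.2.2 ≤ q.1.2} ≃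
    Σ p : Fin s × Fin s, ↥(Finset.Icc p.1 p.2 ×ˢ Finset.Icc p.1 p.2) where
  toFun q := ⟨(q.val.2.1, q.val.1.2), ⟨(q.val.2.2, q.val.1.1), by
    rcases q.prop with ⟨h1, h2, h3, h4⟩
    simp only [Finset.mem_product, Finset.mem_Icc]
    exact ⟨⟨h1, h4⟩, ⟨h3, h2⟩⟩⟩⟩
  invFun r := ⟨((r.2.val.2, r.1.2), (r.1.1, r.2.val.1)), by
    have h := r.2.prop
    simp only [Finset.mem_product, Finset.mem_Icc] at h
    exact ⟨h.1.1, h.2.2, h.2.1, h.1.2⟩⟩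
  left_inv q := rfl
  right_inv r := rfl

lemma cQ_card (s : ℕ) :
    (Fintype.card {q : (Fin s × Fin s) × (Fin s × Fin s) //
        q.2.1 ≤ q.2.2 ∧ q.1.1 ≤ q.1.2 ∧ q.2.1 ≤ q.1.1 ∧ q.2.2 ≤ q.1.2} : ℚ)
      = (s : ℚ) * ((s : ℚ) + 1) ^ 2 * ((s : ℚ) + 2) / 12 := by
  have h1 : Fintype.card {q : (Fin s × Fin s) × (Fin s × Fin s) //
        q.2.1 ≤ q.2.2 ∧ q.1.1 ≤ q.1.2 ∧ q.2.1 ≤ q.1.1 ∧ q.2.2 ≤ q.1.2}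
      = ∑ j ∈ range s, ∑ i ∈ range (j + 1), (i + 1) ^ 2 := by
    rw [Fintype.card_congr (eQ s), Fintype.card_sigma]
    have hfib : ∀ p : Fin s × Fin s,
        Fintype.card ↥(Finset.Icc p.1 p.2 ×ˢ Finset.Icc p.1 p.2)
          = ((p.2 : ℕ) + 1 - (p.1 : ℕ)) ^ 2 := fun p => by
      rw [Fintype.card_coe, Finset.card_product, Fin.card_Icc, sq]
    rw [Fintype.sum_congr _ _ hfib, Fintype.sum_prod_type]
    rw [Fin.sum_univ_eq_sum_range (fun x => ∑ b : Fin s, ((b : ℕ) + 1 - x) ^ 2) s]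
    rw [Finset.sum_congr rfl (fun x _ =>
      Fin.sum_univ_eq_sum_range (fun b => (b + 1 - x) ^ 2) s)]
    exact natsum_trunc_sq s
  rw [h1, Nat.cast_sum]
  have h2 : ∀ j ∈ range s, ((∑ i ∈ range (j + 1), (i + 1) ^ 2 : ℕ) : ℚ)
      = ((j : ℚ) + 1) * ((j : ℚ) + 2) * (2 * (j : ℚ) + 3) / 6 := by
    intro j _
    push_cast
    rw [show ∑ i ∈ range (j+1), ((i:ℚ) + 1) ^ 2 = _ from qsum2 (j+1)]
    push_cast; ring
  rw [show ∑ j ∈ range s, ((∑ i ∈ range (j + 1), (i + 1) ^ 2 : ℕ) : ℚ)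
      = ∑ j ∈ range s, ((j : ℚ) + 1) * ((j : ℚ) + 2) * (2 * (j : ℚ) + 3) / 6 from
    Finset.sum_congr rfl h2]
  exact qsumH2 s

def eQR (s : ℕ) : {q : (Fin s × Fin s) × (Fin s × Fin s) //
      (q.2.1 ≤ q.2.2 ∧ q.1.1 ≤ q.1.2 ∧ q.2.1 ≤ q.1.1 ∧ q.2.2 ≤ q.1.2) ∧ q.2.2 ≤ q.1.1} ≃
    Σ p : Fin s × Fin s, ↥(Finset.Icc p.1 p.2 ×ˢ Finset.Ici p.2) where
  toFun q := ⟨(q.val.2.1, q.val.1.1), ⟨(q.val.2.2, q.val.1.2), by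
    obtain ⟨⟨h1, h2, h3, h4⟩, h5⟩ := q.prop
    simp only [Finset.mem_product, Finset.mem_Icc, Finset.mem_Ici]
    exact ⟨⟨h1, h5⟩, h2⟩⟩⟩
  invFun r := ⟨((r.1.2, r.2.val.2), (r.1.1, r.2.val.1)), by
    have h := r.2.prop
    simp only [Finset.mem_product, Finset.mem_Icc, Finset.mem_Ici] at h
    exact ⟨⟨h.1.1, h.2, h.1.1.trans h.1.2, (h.1.2.trans h.2 : _ ≤ _)⟩, h.1.2⟩⟩
  left_inv q := rfl
  right_inv r := rfl

lemma cQR_card (s : ℕ) :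
    (Fintype.card {q : (Fin s × Fin s) × (Fin s × Fin s) //
        (q.2.1 ≤ q.2.2 ∧ q.1.1 ≤ q.1.2 ∧ q.2.1 ≤ q.1.1 ∧ q.2.2 ≤ q.1.2) ∧ q.2.2 ≤ q.1.1} : ℚ)
      = (s : ℚ) * ((s : ℚ) + 1) * ((s : ℚ) + 2) * ((s : ℚ) + 3) / 24 := by
  have h1 : Fintype.card {q : (Fin s × Fin s) × (Fin s × Fin s) //
        (q.2.1 ≤ q.2.2 ∧ q.1.1 ≤ q.1.2 ∧ q.2.1 ≤ q.1.1 ∧ q.2.2 ≤ q.1.2) ∧ q.2.2 ≤ q.1.1}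
      = ∑ a ∈ range s, (∑ i ∈ range (a + 1), (i + 1)) * (s - a) := by
    rw [Fintype.card_congr (eQR s), Fintype.card_sigma]
    have hfib : ∀ p : Fin s × Fin s,
        Fintype.card ↥(Finset.Icc p.1 p.2 ×ˢ Finset.Ici p.2)
          = ((p.2 : ℕ) + 1 - (p.1 : ℕ)) * (s - (p.2 : ℕ)) := fun p => by
      rw [Fintype.card_coe, Finset.card_product, Fin.card_Icc, Fin.card_Ici]
    rw [Fintype.sum_congr _ _ hfib, Fintype.sum_prod_type]
    rw [Fin.sum_univ_eq_sum_range (fun x => ∑ a : Fin s, ((a : ℕ) + 1 - x) * (s - (a : ℕ))) s]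
    rw [Finset.sum_congr rfl (fun x _ =>
      Fin.sum_univ_eq_sum_range (fun a => (a + 1 - x) * (s - a)) s)]
    exact natsum_trunc_tri s
  rw [h1, Nat.cast_sum]
  have h2 : ∀ a ∈ range s, ((((∑ i ∈ range (a + 1), (i + 1)) * (s - a) : ℕ)) : ℚ)
      = (s : ℚ) * (((a : ℚ) + 1) * ((a : ℚ) + 2)) / 2
        - ((a : ℚ) * ((a : ℚ) + 1) * ((a : ℚ) + 2)) / 2 := by
    intro a ha
    rw [Finset.mem_range] at ha
    rw [Nat.cast_mul, Nat.cast_sub ha.le]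
    push_cast
    rw [show ∑ i ∈ range (a+1), ((i:ℚ) + 1) = _ from qsum1 (a+1)]
    push_cast; ring
  rw [show (∑ a ∈ range s, ((((∑ i ∈ range (a + 1), (i + 1)) * (s - a) : ℕ)) : ℚ)) = _ from
    Finset.sum_congr rfl h2]
  rw [Finset.sum_sub_distrib]
  have hA : ∑ x ∈ range s, (s:ℚ) * (((x:ℚ)+1) * ((x:ℚ)+2)) / 2
      = (s:ℚ) * ((s:ℚ)*((s:ℚ)+1)*((s:ℚ)+2)/3) / 2 := by
    rw [← Finset.sum_div, ← Finset.mul_sum, qsumP2]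
  have hB : ∑ x ∈ range s, (x:ℚ) * ((x:ℚ)+1) * ((x:ℚ)+2) / 2
      = (((s:ℚ)-1)*(s:ℚ)*((s:ℚ)+1)*((s:ℚ)+2)/4) / 2 := by
    rw [← Finset.sum_div, qsumP3]
  rw [hA, hB]
  ring

end CoordCards

section Split
open Finset
variable {X Y : Type*} [Lattice X] [Lattice Y]

def eSplit2 : {p : (X × Y) × (X × Y) // p.1 ≤ p.2} ≃
    {p : X × X // p.1 ≤ p.2} × {p : Y × Y // p.1 ≤ p.2} where
  toFun p := (⟨(p.val.1.1, p.val.2.1), (Prod.le_def.1 p.prop).1⟩,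
    ⟨(p.val.1.2, p.val.2.2), (Prod.le_def.1 p.prop).2⟩)
  invFun r := ⟨((r.1.val.1, r.2.val.1), (r.1.val.2, r.2.val.2)),
    Prod.le_def.2 ⟨r.1.prop, r.2.prop⟩⟩
  left_inv p := rfl
  right_inv r := rfl

def eSplit4 : {q : ((X × Y) × (X × Y)) × ((X × Y) × (X × Y)) //
      q.2.1 ≤ q.2.2 ∧ q.1.1 ≤ q.1.2 ∧ q.2.1 ≤ q.1.1 ∧ q.2.2 ≤ q.1.2} ≃
    {q : (X × X) × (X × X) // q.2.1 ≤ q.2.2 ∧ q.1.1 ≤ q.1.2 ∧ q.2.1 ≤ q.1.1 ∧ q.2.2 ≤ q.1.2} ×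
    {q : (Y × Y) × (Y × Y) // q.2.1 ≤ q.2.2 ∧ q.1.1 ≤ q.1.2 ∧ q.2.1 ≤ q.1.1 ∧ q.2.2 ≤ q.1.2} where
  toFun q := (⟨((q.val.1.1.1, q.val.1.2.1), (q.val.2.1.1, q.val.2.2.1)),
      ⟨(Prod.le_def.1 q.prop.1).1, (Prod.le_def.1 q.prop.2.1).1,
        (Prod.le_def.1 q.prop.2.2.1).1, (Prod.le_def.1 q.prop.2.2.2).1⟩⟩,
    ⟨((q.val.1.1.2, q.val.1.2.2), (q.val.2.1.2, q.val.2.2.2)),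
      ⟨(Prod.le_def.1 q.prop.1).2, (Prod.le_def.1 q.prop.2.1).2,
        (Prod.le_def.1 q.prop.2.2.1).2, (Prod.le_def.1 q.prop.2.2.2).2⟩⟩)
  invFun r := ⟨(((r.1.val.1.1, r.2.val.1.1), (r.1.val.1.2, r.2.val.1.2)),
      ((r.1.val.2.1, r.2.val.2.1), (r.1.val.2.2, r.2.val.2.2))),
    ⟨Prod.le_def.2 ⟨r.1.prop.1, r.2.prop.1⟩, Prod.le_def.2 ⟨r.1.prop.2.1, r.2.prop.2.1⟩,
      Prod.le_def.2 ⟨r.1.prop.2.2.1, r.2.prop.2.2.1⟩,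
      Prod.le_def.2 ⟨r.1.prop.2.2.2, r.2.prop.2.2.2⟩⟩⟩
  left_inv q := rfl
  right_inv r := rfl

def eSplit4R : {q : ((X × Y) × (X × Y)) × ((X × Y) × (X × Y)) //
      (q.2.1 ≤ q.2.2 ∧ q.1.1 ≤ q.1.2 ∧ q.2.1 ≤ q.1.1 ∧ q.2.2 ≤ q.1.2) ∧ q.2.2 ≤ q.1.1} ≃
    {q : (X × X) × (X × X) //
      (q.2.1 ≤ q.2.2 ∧ q.1.1 ≤ q.1.2 ∧ q.2.1 ≤ q.1.1 ∧ q.2.2 ≤ q.1.2) ∧ q.2.2 ≤ q.1.1} ×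
    {q : (Y × Y) × (Y × Y) //
      (q.2.1 ≤ q.2.2 ∧ q.1.1 ≤ q.1.2 ∧ q.2.1 ≤ q.1.1 ∧ q.2.2 ≤ q.1.2) ∧ q.2.2 ≤ q.1.1} where
  toFun q := (⟨((q.val.1.1.1, q.val.1.2.1), (q.val.2.1.1, q.val.2.2.1)),
      ⟨⟨(Prod.le_def.1 q.prop.1.1).1, (Prod.le_def.1 q.prop.1.2.1).1,
        (Prod.le_def.1 q.prop.1.2.2.1).1, (Prod.le_def.1 q.prop.1.2.2.2).1⟩,
        (Prod.le_def.1 q.prop.2).1⟩⟩,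
    ⟨((q.val.1.1.2, q.val.1.2.2), (q.val.2.1.2, q.val.2.2.2)),
      ⟨⟨(Prod.le_def.1 q.prop.1.1).2, (Prod.le_def.1 q.prop.1.2.1).2,
        (Prod.le_def.1 q.prop.1.2.2.1).2, (Prod.le_def.1 q.prop.1.2.2.2).2⟩,
        (Prod.le_def.1 q.prop.2).2⟩⟩)
  invFun r := ⟨(((r.1.val.1.1, r.2.val.1.1), (r.1.val.1.2, r.2.val.1.2)),
      ((r.1.val.2.1, r.2.val.2.1), (r.1.val.2.2, r.2.val.2.2))),
    ⟨⟨Prod.le_def.2 ⟨r.1.prop.1.1, r.2.prop.1.1⟩, Prod.le_def.2 ⟨r.1.prop.1.2.1, r.2.prop.1.2.1⟩,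
      Prod.le_def.2 ⟨r.1.prop.1.2.2.1, r.2.prop.1.2.2.1⟩,
      Prod.le_def.2 ⟨r.1.prop.1.2.2.2, r.2.prop.1.2.2.2⟩⟩,
      Prod.le_def.2 ⟨r.1.prop.2, r.2.prop.2⟩⟩⟩
  left_inv q := rfl
  right_inv r := rfl

end Split

section Grid
open Finset
variable (s t : ℕ)

lemma card_le_q :
    (Fintype.card {p : (Fin s × Fin t) × (Fin s × Fin t) // p.1 ≤ p.2} : ℚ)
      = ((s : ℚ) * ((s : ℚ) + 1) / 2) * ((t : ℚ) * ((t : ℚ) + 1) / 2) := by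
  rw [Fintype.card_congr (eSplit2 (X := Fin s) (Y := Fin t)), Fintype.card_prod]
  push_cast
  rw [c2_card, c2_card]

lemma card_diag (α : Type*) [Fintype α] [DecidableEq α] :
    (Finset.univ.filter fun p : α × α => p.1 = p.2).card = Fintype.card α := by
  have himg : (Finset.univ.filter fun p : α × α => p.1 = p.2)
      = Finset.univ.image (fun a : α => (a, a)) := by
    ext ⟨a, b⟩
    simp only [Finset.mem_filter, Finset.mem_univ, true_and, Finset.mem_image]
    constructor
    · rintro rfl; exact ⟨a, rfl⟩
    · rintro ⟨c, hc⟩; injection hc with h1 h2; rw [← h1, ← h2]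
  rw [himg, Finset.card_image_of_injective _ (fun a b h => congrArg Prod.fst h),
    Finset.card_univ]

instance declt : DecidablePred (fun p : (Fin s × Fin t) × (Fin s × Fin t) => p.1 < p.2) :=
  fun p => decidable_of_iff (p.1 ≤ p.2 ∧ ¬ p.2 ≤ p.1) lt_iff_le_not_ge.symm

lemma card_lt_q :
    (Fintype.card {p : (Fin s × Fin t) × (Fin s × Fin t) // p.1 < p.2} : ℚ)
      = ((s : ℚ) * ((s : ℚ) + 1) / 2) * ((t : ℚ) * ((t : ℚ) + 1) / 2) - (s : ℚ) * (t : ℚ) := by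
  have hsplit : (Finset.univ.filter fun p : (Fin s × Fin t) × (Fin s × Fin t) => p.1 ≤ p.2)
      = (Finset.univ.filter fun p => p.1 < p.2) ∪ (Finset.univ.filter fun p => p.1 = p.2) := by
    rw [← Finset.filter_or]
    exact Finset.filter_congr fun p _ => by
      constructor
      · intro h; exact h.lt_or_eq
      · rintro (h | h); exacts [h.le, h.le]
  have hdisj : Disjoint (Finset.univ.filter fun p : (Fin s × Fin t) × (Fin s × Fin t) => p.1 < p.2)
      (Finset.univ.filter fun p => p.1 = p.2) := by
    rw [Finset.disjoint_left]
    intro p hp hq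
    rw [Finset.mem_filter] at hp hq
    exact hp.2.ne hq.2
  have hcards : Fintype.card {p : (Fin s × Fin t) × (Fin s × Fin t) // p.1 ≤ p.2}
      = Fintype.card {p : (Fin s × Fin t) × (Fin s × Fin t) // p.1 < p.2} + s * t := by
    rw [Fintype.card_subtype, Fintype.card_subtype, hsplit,
      Finset.card_union_of_disjoint hdisj, card_diag]
    simp [Fintype.card_prod]
  have := card_le_q s t
  rw [hcards] at this
  push_cast at this
  linarith
end Grid

section Grid2
open Finset
variable (s t : ℕ)

instance declt' : DecidableRel ((· < ·) : (Fin s × Fin t) → (Fin s × Fin t) → Prop) :=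
  fun a b => decidable_of_iff (a ≤ b ∧ ¬ b ≤ a) lt_iff_le_not_ge.symm

lemma card_num_q :
    (Fintype.card {q : ((Fin s × Fin t) × (Fin s × Fin t)) × ((Fin s × Fin t) × (Fin s × Fin t)) //
        q.1.1 < q.1.2 ∧ q.2.1 < q.2.2 ∧ q.2.1 ≤ q.1.1 ∧ q.2.2 ≤ q.1.2 ∧ ¬ q.2.2 ≤ q.1.1} : ℚ)
      = ((s : ℚ) * ((s : ℚ) + 1) ^ 2 * ((s : ℚ) + 2) / 12)
          * ((t : ℚ) * ((t : ℚ) + 1) ^ 2 * ((t : ℚ) + 2) / 12)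
        - ((s : ℚ) * ((s : ℚ) + 1) * ((s : ℚ) + 2) * ((s : ℚ) + 3) / 24)
          * ((t : ℚ) * ((t : ℚ) + 1) * ((t : ℚ) + 2) * ((t : ℚ) + 3) / 24) := by
  classical
  have hiff : ∀ q : ((Fin s × Fin t) × (Fin s × Fin t)) × ((Fin s × Fin t) × (Fin s × Fin t)),
      (q.1.1 < q.1.2 ∧ q.2.1 < q.2.2 ∧ q.2.1 ≤ q.1.1 ∧ q.2.2 ≤ q.1.2 ∧ ¬ q.2.2 ≤ q.1.1)
        ↔ ((q.2.1 ≤ q.2.2 ∧ q.1.1 ≤ q.1.2 ∧ q.2.1 ≤ q.1.1 ∧ q.2.2 ≤ q.1.2) ∧ ¬ q.2.2 ≤ q.1.1) := by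
    rintro ⟨⟨a, b⟩, ⟨x, y⟩⟩
    dsimp only
    constructor
    · rintro ⟨h1, h2, h3, h4, h5⟩
      exact ⟨⟨h2.le, h1.le, h3, h4⟩, h5⟩
    · rintro ⟨⟨hxy, hab, hxa, hyb⟩, hya⟩
      refine ⟨hab.lt_of_ne fun he => hya (he ▸ hyb), hxy.lt_of_ne fun he => hya (he ▸ hxa),
        hxa, hyb, hya⟩
  rw [Fintype.card_congr (Equiv.subtypeEquivRight hiff)]
  have key : (Finset.univ.filter
        (fun q : ((Fin s × Fin t) × (Fin s × Fin t)) × ((Fin s × Fin t) × (Fin s × Fin t)) =>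
          (q.2.1 ≤ q.2.2 ∧ q.1.1 ≤ q.1.2 ∧ q.2.1 ≤ q.1.1 ∧ q.2.2 ≤ q.1.2) ∧ q.2.2 ≤ q.1.1)).card
      + (Finset.univ.filter
        (fun q : ((Fin s × Fin t) × (Fin s × Fin t)) × ((Fin s × Fin t) × (Fin s × Fin t)) =>
          (q.2.1 ≤ q.2.2 ∧ q.1.1 ≤ q.1.2 ∧ q.2.1 ≤ q.1.1 ∧ q.2.2 ≤ q.1.2) ∧ ¬ q.2.2 ≤ q.1.1)).card
      = (Finset.univ.filter
        (fun q : ((Fin s × Fin t) × (Fin s × Fin t)) × ((Fin s × Fin t) × (Fin s × Fin t)) =>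
          q.2.1 ≤ q.2.2 ∧ q.1.1 ≤ q.1.2 ∧ q.2.1 ≤ q.1.1 ∧ q.2.2 ≤ q.1.2)).card := by
    have base := Finset.card_filter_add_card_filter_not
      (s := Finset.univ.filter
        (fun q : ((Fin s × Fin t) × (Fin s × Fin t)) × ((Fin s × Fin t) × (Fin s × Fin t)) =>
          q.2.1 ≤ q.2.2 ∧ q.1.1 ≤ q.1.2 ∧ q.2.1 ≤ q.1.1 ∧ q.2.2 ≤ q.1.2))
      (p := fun q : ((Fin s × Fin t) × (Fin s × Fin t)) × ((Fin s × Fin t) × (Fin s × Fin t)) =>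
        q.2.2 ≤ q.1.1)
    rw [Finset.filter_filter, Finset.filter_filter] at base
    exact base
  have hQ : (Fintype.card {q : ((Fin s × Fin t) × (Fin s × Fin t)) ×
        ((Fin s × Fin t) × (Fin s × Fin t)) //
        q.2.1 ≤ q.2.2 ∧ q.1.1 ≤ q.1.2 ∧ q.2.1 ≤ q.1.1 ∧ q.2.2 ≤ q.1.2} : ℚ)
      = ((s : ℚ) * ((s : ℚ) + 1) ^ 2 * ((s : ℚ) + 2) / 12)
          * ((t : ℚ) * ((t : ℚ) + 1) ^ 2 * ((t : ℚ) + 2) / 12) := by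
    rw [Fintype.card_congr (eSplit4 (X := Fin s) (Y := Fin t)), Fintype.card_prod]
    push_cast
    rw [cQ_card, cQ_card]
  have hQR : (Fintype.card {q : ((Fin s × Fin t) × (Fin s × Fin t)) ×
        ((Fin s × Fin t) × (Fin s × Fin t)) //
        (q.2.1 ≤ q.2.2 ∧ q.1.1 ≤ q.1.2 ∧ q.2.1 ≤ q.1.1 ∧ q.2.2 ≤ q.1.2) ∧ q.2.2 ≤ q.1.1} : ℚ)
      = ((s : ℚ) * ((s : ℚ) + 1) * ((s : ℚ) + 2) * ((s : ℚ) + 3) / 24)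
          * ((t : ℚ) * ((t : ℚ) + 1) * ((t : ℚ) + 2) * ((t : ℚ) + 3) / 24) := by
    rw [Fintype.card_congr (eSplit4R (X := Fin s) (Y := Fin t)), Fintype.card_prod]
    push_cast
    rw [cQR_card, cQR_card]
  rw [Fintype.card_subtype] at hQ hQR ⊢
  have keyq := congrArg (fun k : ℕ => (k : ℚ)) key
  push_cast at keyq
  linarith
end Grid2

section TSCards
open TransferSystem
variable (L : Type*) [Lattice L] [Finite L]

theorem card_supIrred_eq :
    Nat.card {T : TransferSystem L // SupIrred T} = Nat.card {p : L × L // p.1 < p.2} := by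
  refine (Nat.card_eq_of_bijective
    (fun p : {p : L × L // p.1 < p.2} =>
      (⟨gen p.val.1 p.val.2, supIrred_gen p.prop⟩ : {T : TransferSystem L // SupIrred T}))
    ⟨?_, ?_⟩).symm
  · intro p q h
    obtain ⟨h1, h2⟩ := gen_inj p.prop q.prop (congrArg Subtype.val h)
    exact Subtype.ext (Prod.ext h1 h2)
  · rintro ⟨T, hT⟩
    obtain ⟨x, y, hxy, rfl⟩ := supIrred_iff.1 hT
    exact ⟨⟨(x, y), hxy⟩, rfl⟩

theorem card_infIrred_eq :
    Nat.card {T : TransferSystem L // InfIrred T} = Nat.card {p : L × L // p.1 < p.2} := by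
  refine (Nat.card_eq_of_bijective
    (fun p : {p : L × L // p.1 < p.2} =>
      (⟨comax p.val.1 p.val.2, infIrred_comax p.prop⟩ : {T : TransferSystem L // InfIrred T}))
    ⟨?_, ?_⟩).symm
  · intro p q h
    obtain ⟨h1, h2⟩ := comax_inj p.prop q.prop (congrArg Subtype.val h)
    exact Subtype.ext (Prod.ext h1 h2)
  · rintro ⟨T, hT⟩
    obtain ⟨x, y, hxy, rfl⟩ := infIrred_iff.1 hT
    exact ⟨⟨(x, y), hxy⟩, rfl⟩

theorem card_numerator_eq :
    Nat.card {p : TransferSystem L × TransferSystem L //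
        SupIrred p.1 ∧ InfIrred p.2 ∧ ¬ p.1 ≤ p.2}
      = Nat.card {q : (L × L) × (L × L) // q.1.1 < q.1.2 ∧ q.2.1 < q.2.2 ∧
          q.2.1 ≤ q.1.1 ∧ q.2.2 ≤ q.1.2 ∧ ¬ q.2.2 ≤ q.1.1} := by
  refine (Nat.card_eq_of_bijective
    (fun q : {q : (L × L) × (L × L) // q.1.1 < q.1.2 ∧ q.2.1 < q.2.2 ∧
        q.2.1 ≤ q.1.1 ∧ q.2.2 ≤ q.1.2 ∧ ¬ q.2.2 ≤ q.1.1} =>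
      (⟨(gen q.val.1.1 q.val.1.2, comax q.val.2.1 q.val.2.2),
        ⟨supIrred_gen q.prop.1, infIrred_comax q.prop.2.1,
          (gen_le_comax_iff q.prop.1.le).2
            ⟨q.prop.2.2.1, q.prop.2.2.2.1, q.prop.2.2.2.2⟩⟩⟩ :
        {p : TransferSystem L × TransferSystem L //
          SupIrred p.1 ∧ InfIrred p.2 ∧ ¬ p.1 ≤ p.2})) ⟨?_, ?_⟩).symm
  · intro p q h
    have hval := congrArg Subtype.val h
    have hg : gen p.val.1.1 p.val.1.2 = gen q.val.1.1 q.val.1.2 := congrArg Prod.fst hval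
    have hc : comax p.val.2.1 p.val.2.2 = comax q.val.2.1 q.val.2.2 := congrArg Prod.snd hval
    obtain ⟨hg1, hg2⟩ := gen_inj p.prop.1 q.prop.1 hg
    obtain ⟨hc1, hc2⟩ := comax_inj p.prop.2.1 q.prop.2.1 hc
    exact Subtype.ext (Prod.ext (Prod.ext hg1 hg2) (Prod.ext hc1 hc2))
  · rintro ⟨⟨S, T⟩, hS, hT, hle⟩
    obtain ⟨a, b, hab, rfl⟩ := supIrred_iff.1 hS
    obtain ⟨x, y, hxy, rfl⟩ := infIrred_iff.1 hT
    obtain ⟨c1, c2, c3⟩ := (gen_le_comax_iff hab.le).1 hle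
    exact ⟨⟨((a, b), (x, y)), hab, hxy, c1, c2, c3⟩, rfl⟩

end TSCards



/-- For `n, m ≥ 1`,
`ρ(Tr([n] × [m])) = (m+2)(m+3)(n+2)(n+3)(3mn+4m+4n) / (36(m+1)(n+1)(2m+2n+mn)²)`. -/
theorem codensity_chain_prod (n m : ℕ) (hn : 1 ≤ n) (hm : 1 ≤ m) :
    codensity (TransferSystem (Fin (n + 1) × Fin (m + 1))) =
      ((m : ℚ) + 2) * ((m : ℚ) + 3) * ((n : ℚ) + 2) * ((n : ℚ) + 3) *
          (3 * m * n + 4 * m + 4 * n) /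
        (36 * ((m : ℚ) + 1) * ((n : ℚ) + 1) * (2 * m + 2 * n + m * n) ^ 2) := by
  have e1 := card_supIrred_eq (Fin (n + 1) × Fin (m + 1))
  have e2 := card_infIrred_eq (Fin (n + 1) × Fin (m + 1))
  have e3 := card_numerator_eq (Fin (n + 1) × Fin (m + 1))
  rw [codensity, e1, e2, e3, Nat.card_eq_fintype_card, Nat.card_eq_fintype_card]
  rw [card_lt_q, card_num_q]
  have hn1 : (1 : ℚ) ≤ (n : ℚ) := by exact_mod_cast hn
  have hm1 : (1 : ℚ) ≤ (m : ℚ) := by exact_mod_cast hm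
  have hnm : (0 : ℚ) < 2 * (m : ℚ) + 2 * (n : ℚ) + (m : ℚ) * (n : ℚ) := by nlinarith
  have hj : (0 : ℚ) < ((n : ℚ) + 1) * ((n : ℚ) + 2) / 2 * (((m : ℚ) + 1) * ((m : ℚ) + 2) / 2)
      - ((n : ℚ) + 1) * ((m : ℚ) + 1) := by
    nlinarith [mul_pos (mul_pos (show (0:ℚ) < (n:ℚ)+1 by linarith)
      (show (0:ℚ) < (m:ℚ)+1 by linarith)) hnm]
  have hdpos : (0 : ℚ) < 36 * ((m : ℚ) + 1) * ((n : ℚ) + 1)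
      * (2 * (m : ℚ) + 2 * (n : ℚ) + (m : ℚ) * (n : ℚ)) ^ 2 :=
    mul_pos (mul_pos (mul_pos (by norm_num) (by linarith)) (by linarith)) (pow_pos hnm 2)
  push_cast
  rw [div_eq_div_iff]
  · ring
  · exact ne_of_gt (by nlinarith [mul_pos hj hj])
  · exact ne_of_gt hdpos
end
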